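/- arXiv:2603.08864 — 9 statements merged into one kernel-verified Lean document; each statement's English description precedes it below -/
import Mathlib

section
/- Let p > 1 and α < 0 be real numbers. Then for every finitely supported sequence u : ℕ → ℂ with u_0 = 0, one has ∑_{n=1}^∞ n^α |u_n − u_{n−1}|^p ≥ ((p − α − 1)/p)^p · ∑_{n=1}^∞ (n+1)^{α−p} |u_n|^p. -/
open Real Finset

/-- Abel summation with vanishing endpoints. -/
lemma hardy_abel (c F : ℕ → ℝ) (N : ℕ) (hF0 : F 0 = 0) (hFN : F N = 0) :
    ∑ m ∈ Finset.range N, c (m + 1) * (F (m + 1) - F m) =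
      ∑ m ∈ Finset.range N, (c (m + 1) - c (m + 2)) * F (m + 1) := by
  rw [← sub_eq_zero, ← Finset.sum_sub_distrib]
  have h : ∀ m ∈ Finset.range N,
      c (m + 1) * (F (m + 1) - F m) - (c (m + 1) - c (m + 2)) * F (m + 1)
      = (fun k => c (k + 1) * F k) (m + 1) - (fun k => c (k + 1) * F k) m := by
    intro m _; simp only []; ring
  rw [Finset.sum_congr rfl h, Finset.sum_range_sub (fun k => c (k + 1) * F k)]
  simp [hF0, hFN]

/-- Bernoulli-type: `1 + γ*s ≤ (1-s)^(-γ)` for `0 < s ≤ 1/2`, `0 < γ`. -/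
lemma hardy_bernoulli_neg {γ s : ℝ} (hγ : 0 < γ) (hs : 0 < s) (hs2 : s ≤ 1/2) :
    1 + γ * s ≤ (1 - s) ^ (-γ) := by
  have h1s : 0 < 1 - s := by linarith
  rcases le_or_gt 1 γ with hγ1 | hγ1
  · have hs' : 0 ≤ s / (1 - s) := by positivity
    have hber := one_add_mul_self_le_rpow_one_add (s := s / (1 - s)) (by linarith) hγ1
    have he : (1 : ℝ) + s / (1 - s) = (1 - s)⁻¹ := by field_simp; ring
    rw [he] at hber
    have he2 : ((1 - s)⁻¹) ^ γ = (1 - s) ^ (-γ) := by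
      rw [← Real.rpow_neg_one (1 - s), ← Real.rpow_mul h1s.le]
      norm_num
    rw [he2] at hber
    refine le_trans ?_ hber
    have hss : s ≤ s / (1 - s) := by
      rw [le_div_iff₀ h1s]; nlinarith
    nlinarith
  · have hber := rpow_one_add_le_one_add_mul_self (s := -s) (by linarith) hγ.le hγ1.le
    have he : (1 : ℝ) + -s = 1 - s := by ring
    rw [he] at hber
    have hpos : 0 < 1 - γ * s := by nlinarith
    rw [Real.rpow_neg h1s.le]
    have h3 : (1 - γ * s)⁻¹ ≤ ((1 - s) ^ γ)⁻¹ := by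
      apply inv_anti₀ (Real.rpow_pos_of_pos h1s γ)
      linarith [hber]
    refine le_trans ?_ h3
    have h4 : (1 + γ * s) * (1 - γ * s) ≤ 1 := by nlinarith [sq_nonneg (γ * s)]
    calc 1 + γ * s = (1 + γ * s) * (1 - γ * s) * (1 - γ * s)⁻¹ := by
          field_simp
      _ ≤ 1 * (1 - γ * s)⁻¹ := by
          apply mul_le_mul_of_nonneg_right h4 (by positivity)
      _ = (1 - γ * s)⁻¹ := one_mul _

/-- Convexity tail bound: `γ (x+1)^(-γ-1) ≤ x^(-γ) - (x+1)^(-γ)` for `x ≥ 1`. -/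
lemma hardy_conv {γ : ℝ} (hγ : 0 < γ) {x : ℝ} (hx : 1 ≤ x) :
    γ * (x + 1) ^ (-γ - 1) ≤ x ^ (-γ) - (x + 1) ^ (-γ) := by
  have hx0 : 0 < x := by linarith
  have hx1 : 0 < x + 1 := by linarith
  set s : ℝ := 1 / (x + 1) with hsdef
  have hs : 0 < s := by positivity
  have hs2 : s ≤ 1 / 2 := by
    rw [hsdef, div_le_div_iff₀ hx1 two_pos]; linarith
  have key := hardy_bernoulli_neg hγ hs hs2
  have h1s : (1 : ℝ) - s = x / (x + 1) := by rw [hsdef]; field_simp; ring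
  rw [h1s] at key
  have hxs : (x / (x + 1)) ^ (-γ) * (x + 1) ^ (-γ) = x ^ (-γ) := by
    rw [← Real.mul_rpow (by positivity) hx1.le, div_mul_cancel₀ _ hx1.ne']
  have hmain : (1 + γ * s) * (x + 1) ^ (-γ) ≤ x ^ (-γ) := by
    rw [← hxs]
    exact mul_le_mul_of_nonneg_right key (Real.rpow_nonneg hx1.le _)
  have hID : γ * (x + 1) ^ (-γ - 1) = γ * s * (x + 1) ^ (-γ) := by
    rw [Real.rpow_sub hx1, Real.rpow_one, hsdef]; ring
  have hexp : (1 + γ * s) * (x + 1) ^ (-γ)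
      = (x + 1) ^ (-γ) + γ * s * (x + 1) ^ (-γ) := by ring
  rw [hID]
  linarith [hexp ▸ hmain]

/-- Sum bound: `∑_{k<n} (k+1)^(γ-1) ≤ (n+1)^γ / γ`. -/
lemma hardy_sum_bound {γ : ℝ} (hγ : 0 < γ) (n : ℕ) :
    ∑ k ∈ Finset.range n, ((k : ℝ) + 1) ^ (γ - 1) ≤ ((n : ℝ) + 1) ^ γ / γ := by
  rcases le_or_gt 1 γ with hγ1 | hγ1
  · have hstep : ∀ k : ℕ, ((k : ℝ) + 1) ^ (γ - 1)
        ≤ (((k : ℝ) + 2) ^ γ - ((k : ℝ) + 1) ^ γ) / γ := by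
      intro k
      have hk1 : (0 : ℝ) < (k : ℝ) + 1 := by positivity
      have hneg1 : (-1 : ℝ) ≤ 1 / ((k : ℝ) + 1) :=
        le_trans (by norm_num) (by positivity : (0:ℝ) ≤ 1 / ((k : ℝ) + 1))
      have hber := one_add_mul_self_le_rpow_one_add hneg1 hγ1
      have he : (1 : ℝ) + 1 / ((k : ℝ) + 1) = ((k : ℝ) + 2) / ((k : ℝ) + 1) := by
        field_simp; ring
      rw [he, Real.div_rpow (by positivity) hk1.le,
        le_div_iff₀ (Real.rpow_pos_of_pos hk1 γ)] at hber
      have h4 : ((k : ℝ) + 1) ^ γ * (γ * (1 / ((k : ℝ) + 1))) = γ * ((k : ℝ) + 1) ^ (γ - 1) := by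
        rw [Real.rpow_sub hk1, Real.rpow_one]; field_simp
      have hexp : (1 + γ * (1 / ((k : ℝ) + 1))) * ((k : ℝ) + 1) ^ γ
          = ((k : ℝ) + 1) ^ γ + ((k : ℝ) + 1) ^ γ * (γ * (1 / ((k : ℝ) + 1))) := by ring
      rw [le_div_iff₀ hγ]
      rw [hexp] at hber
      linarith [hber, h4]
    calc ∑ k ∈ Finset.range n, ((k : ℝ) + 1) ^ (γ - 1)
        ≤ ∑ k ∈ Finset.range n, ((((k : ℝ) + 2) ^ γ - ((k : ℝ) + 1) ^ γ) / γ) :=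
          Finset.sum_le_sum fun k _ => hstep k
      _ = (((n : ℝ) + 1) ^ γ - 1) / γ := by
          have hterm : ∀ k ∈ Finset.range n, (((k : ℝ) + 2) ^ γ - ((k : ℝ) + 1) ^ γ) / γ
              = (fun m : ℕ => ((m : ℝ) + 1) ^ γ / γ) (k + 1)
                - (fun m : ℕ => ((m : ℝ) + 1) ^ γ / γ) k := by
            intro k _
            simp only []
            push_cast
            rw [show ((k : ℝ) + 1 + 1) = (k : ℝ) + 2 by ring]
            ring
          rw [Finset.sum_congr rfl hterm, Finset.sum_range_sub (fun m : ℕ => ((m : ℝ) + 1) ^ γ / γ)]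
          norm_num [sub_div, Real.one_rpow]
      _ ≤ ((n : ℝ) + 1) ^ γ / γ := by gcongr ?_ / γ; linarith
  · have hstep : ∀ k : ℕ, ((k : ℝ) + 1) ^ (γ - 1)
        ≤ (((k : ℝ) + 1) ^ γ - (k : ℝ) ^ γ) / γ := by
      intro k
      have hk1 : (0 : ℝ) < (k : ℝ) + 1 := by positivity
      have hneg1 : (-1 : ℝ) ≤ -(1 / ((k : ℝ) + 1)) := by
        rw [neg_le_neg_iff, div_le_one hk1]; linarith [Nat.cast_nonneg (α := ℝ) k]
      have hber := rpow_one_add_le_one_add_mul_self hneg1 hγ.le hγ1.le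
      have he : (1 : ℝ) + -(1 / ((k : ℝ) + 1)) = (k : ℝ) / ((k : ℝ) + 1) := by
        field_simp; ring
      rw [he, Real.div_rpow (Nat.cast_nonneg k) hk1.le,
        div_le_iff₀ (Real.rpow_pos_of_pos hk1 γ)] at hber
      have h4 : ((k : ℝ) + 1) ^ γ * (γ * (1 / ((k : ℝ) + 1))) = γ * ((k : ℝ) + 1) ^ (γ - 1) := by
        rw [Real.rpow_sub hk1, Real.rpow_one]; field_simp
      have hexp : (1 + γ * -(1 / ((k : ℝ) + 1))) * ((k : ℝ) + 1) ^ γ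
          = ((k : ℝ) + 1) ^ γ - ((k : ℝ) + 1) ^ γ * (γ * (1 / ((k : ℝ) + 1))) := by ring
      rw [le_div_iff₀ hγ]
      rw [hexp] at hber
      linarith [hber, h4]
    calc ∑ k ∈ Finset.range n, ((k : ℝ) + 1) ^ (γ - 1)
        ≤ ∑ k ∈ Finset.range n, ((((k : ℝ) + 1) ^ γ - (k : ℝ) ^ γ) / γ) :=
          Finset.sum_le_sum fun k _ => hstep k
      _ = (n : ℝ) ^ γ / γ := by
          have hterm : ∀ k ∈ Finset.range n, (((k : ℝ) + 1) ^ γ - (k : ℝ) ^ γ) / γ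
              = (fun m : ℕ => ((m : ℝ)) ^ γ / γ) (k + 1) - (fun m : ℕ => ((m : ℝ)) ^ γ / γ) k := by
            intro k _
            simp only []
            push_cast
            ring
          rw [Finset.sum_congr rfl hterm, Finset.sum_range_sub (fun m : ℕ => ((m : ℝ)) ^ γ / γ)]
          simp [Real.zero_rpow hγ.ne']
      _ ≤ ((n : ℝ) + 1) ^ γ / γ := by
          gcongr ?_ / γ
          exact Real.rpow_le_rpow (Nat.cast_nonneg n) (by linarith) hγ.le

/-- Two-point weighted power mean inequality over ℝ. -/
lemma hardy_mean2 {p a b y z : ℝ} (hp : 1 ≤ p) (ha : 0 ≤ a) (hb : 0 ≤ b)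
    (hab : a + b = 1) (hy : 0 ≤ y) (hz : 0 ≤ z) :
    (a * y + b * z) ^ p ≤ a * y ^ p + b * z ^ p := by
  have := (convexOn_rpow hp).2 (Set.mem_Ici.2 hy) (Set.mem_Ici.2 hz) ha hb hab
  simpa [smul_eq_mul] using this

/-- Discrete Picone-type inequality. -/
lemma hardy_picone {p t s A c : ℝ} (hp : 1 < p) (ht : 0 ≤ t) (hs : 0 ≤ s)
    (hc : 0 < c) (hA : 0 ≤ A) (hA0 : A = 0 → s = 0) :
    t ^ p / (A + c) ^ (p - 1) - s ^ p / A ^ (p - 1) ≤ |t - s| ^ p / c ^ (p - 1) := by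
  have hp1 : (0:ℝ) < p - 1 := by linarith
  rcases eq_or_lt_of_le hA with hA' | hApos
  · have hs0 : s = 0 := hA0 hA'.symm
    subst hs0
    rw [← hA', Real.zero_rpow hp1.ne', div_zero, sub_zero, zero_add, sub_zero,
      abs_of_nonneg ht]
  · set B := A + c with hB
    have hBpos : 0 < B := by positivity
    have hy : 0 ≤ s / A := by positivity
    have hz : 0 ≤ |t - s| / c := by positivity
    have hts : t ≤ s + |t - s| := by
      have := le_abs_self (t - s); linarith
    have h5 : t / B ≤ (A / B) * (s / A) + (c / B) * (|t - s| / c) := by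
      have he : (A / B) * (s / A) + (c / B) * (|t - s| / c) = (s + |t - s|) / B := by
        field_simp
      rw [he]
      gcongr
    have hab : A / B + c / B = 1 := by field_simp; exact hB.symm
    have h6 : (t / B) ^ p ≤ (A / B) * (s / A) ^ p + (c / B) * (|t - s| / c) ^ p := by
      refine le_trans (Real.rpow_le_rpow (by positivity) h5 (by linarith)) ?_
      exact hardy_mean2 hp.le (by positivity) (by positivity) hab hy hz
    have hAp : A ^ p = A ^ (p - 1) * A := by
      rw [← Real.rpow_add_one hApos.ne' (p - 1)]; norm_num
    have hcp : c ^ p = c ^ (p - 1) * c := by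
      rw [← Real.rpow_add_one hc.ne' (p - 1)]; norm_num
    have hBp : B ^ p = B ^ (p - 1) * B := by
      rw [← Real.rpow_add_one hBpos.ne' (p - 1)]; norm_num
    have e1 : (t / B) ^ p = t ^ p / B ^ p := Real.div_rpow ht hBpos.le p
    have e2 : (s / A) ^ p = s ^ p / A ^ p := Real.div_rpow hs hApos.le p
    have e3 : (|t - s| / c) ^ p = |t - s| ^ p / c ^ p := Real.div_rpow (abs_nonneg _) hc.le p
    rw [e1, e2, e3, hAp, hcp, hBp] at h6
    have hApos' : (0:ℝ) < A ^ (p - 1) := Real.rpow_pos_of_pos hApos _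
    have hcpos' : (0:ℝ) < c ^ (p - 1) := Real.rpow_pos_of_pos hc _
    have hBpos' : (0:ℝ) < B ^ (p - 1) := Real.rpow_pos_of_pos hBpos _
    rw [sub_le_iff_le_add, div_le_iff₀ hBpos']
    have expand : (A / B * (s ^ p / (A ^ (p - 1) * A)) + c / B * (|t - s| ^ p / (c ^ (p - 1) * c)))
        * (B ^ (p - 1) * B)
        = (|t - s| ^ p / c ^ (p - 1) + s ^ p / A ^ (p - 1)) * B ^ (p - 1) := by
      field_simp
      ring
    calc t ^ p = t ^ p / (B ^ (p - 1) * B) * (B ^ (p - 1) * B) := by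
          field_simp
      _ ≤ (A / B * (s ^ p / (A ^ (p - 1) * A)) + c / B * (|t - s| ^ p / (c ^ (p - 1) * c)))
          * (B ^ (p - 1) * B) := mul_le_mul_of_nonneg_right h6 (by positivity)
      _ = (|t - s| ^ p / c ^ (p - 1) + s ^ p / A ^ (p - 1)) * B ^ (p - 1) := expand


/-- Core finite-sum inequality for nonnegative real sequences. -/
lemma hardy_core (p α : ℝ) (hp : 1 < p) (hα : α < 0) (N : ℕ) (t b : ℕ → ℝ)
    (htnn : ∀ n, 0 ≤ t n) (ht0 : t 0 = 0) (htN : t N = 0)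
    (hb : ∀ n, |t (n + 1) - t n| ≤ b n) :
    ((p - α - 1) / p) ^ p * ∑ n ∈ Finset.range N, ((n : ℝ) + 2) ^ (α - p) * t (n + 1) ^ p
      ≤ ∑ n ∈ Finset.range N, ((n : ℝ) + 1) ^ α * b n ^ p := by
  have hp0 : (0:ℝ) < p := by linarith
  have hp1 : (0:ℝ) < p - 1 := by linarith
  have hpne : p ≠ 0 := hp0.ne'
  set γ : ℝ := (p - α - 1) / p with hγdef
  have hγpos : 0 < γ := div_pos (by linarith) hp0
  set g : ℕ → ℝ := fun n => ∑ k ∈ Finset.range n, ((k : ℝ) + 1) ^ (γ - 1) with hgdef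
  set F : ℕ → ℝ := fun n => t n ^ p / g n ^ (p - 1) with hFdef
  set c : ℕ → ℝ := fun m => ((m : ℝ)) ^ (-γ) with hcdef
  have hgnn : ∀ n, 0 ≤ g n := by
    intro n
    simp only [hgdef]
    exact Finset.sum_nonneg fun k _ => Real.rpow_nonneg (by positivity) _
  have hgsucc : ∀ n : ℕ, g (n + 1) = g n + ((n : ℝ) + 1) ^ (γ - 1) := by
    intro n
    simp only [hgdef]
    exact Finset.sum_range_succ _ n
  have hgpos : ∀ n : ℕ, 0 < g (n + 1) := by
    intro n
    have h1 : (0:ℝ) < ((n : ℝ) + 1) ^ (γ - 1) := Real.rpow_pos_of_pos (by positivity) _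
    have h2 := hgnn n
    rw [hgsucc n]; linarith
  have hF0 : F 0 = 0 := by
    simp only [hFdef]
    simp [ht0, Real.zero_rpow hp0.ne']
  have hFN : F N = 0 := by
    simp only [hFdef]
    simp [htN, Real.zero_rpow hp0.ne']
  have hexpα : -γ - (γ - 1) * (p - 1) = α := by
    rw [hγdef]; field_simp; ring
  have hexpconv : α - p + γ * (p - 1) = -γ - 1 := by
    rw [hγdef]; field_simp; ring
  have step1 : ∀ n ∈ Finset.range N,
      γ ^ p * (((n : ℝ) + 2) ^ (α - p) * t (n + 1) ^ p)
        ≤ (c (n + 1) - c (n + 2)) * F (n + 1) := by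
    intro n _
    have hn2 : (0:ℝ) < (n : ℝ) + 2 := by positivity
    have hgub : g (n + 1) ≤ ((n : ℝ) + 2) ^ γ / γ := by
      have h := hardy_sum_bound hγpos (n + 1)
      push_cast at h
      rw [show ((n:ℝ) + 1 + 1) = (n : ℝ) + 2 from by ring] at h
      simpa only [hgdef] using h
    have h1 : g (n + 1) ^ (p - 1) ≤ (((n : ℝ) + 2) ^ γ / γ) ^ (p - 1) :=
      Real.rpow_le_rpow (hgnn _) hgub (by linarith)
    have h2 : (((n : ℝ) + 2) ^ γ / γ) ^ (p - 1)
        = ((n : ℝ) + 2) ^ (γ * (p - 1)) / γ ^ (p - 1) := by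
      rw [Real.div_rpow (Real.rpow_nonneg hn2.le γ) hγpos.le, ← Real.rpow_mul hn2.le]
    have hγp : γ ^ p = γ ^ (p - 1) * γ := by
      rw [← Real.rpow_add_one hγpos.ne' (p - 1)]; norm_num
    have hsplit : ((n:ℝ)+2) ^ (α - p) * ((n:ℝ)+2) ^ (γ * (p - 1)) = ((n:ℝ)+2) ^ (-γ - 1) := by
      rw [← Real.rpow_add hn2, hexpconv]
    have hγpne : γ ^ (p - 1) ≠ 0 := (Real.rpow_pos_of_pos hγpos (p - 1)).ne'
    have hc1 : c (n + 1) = ((n : ℝ) + 1) ^ (-γ) := by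
      simp only [hcdef]; push_cast; ring_nf
    have hc2 : c (n + 2) = ((n : ℝ) + 2) ^ (-γ) := by
      simp only [hcdef]; push_cast; ring_nf
    have hconv := hardy_conv hγpos (show (1:ℝ) ≤ (n:ℝ) + 1 by
      have := Nat.cast_nonneg (α := ℝ) n; linarith)
    rw [show ((n:ℝ) + 1 + 1) = (n : ℝ) + 2 from by ring] at hconv
    have star : γ ^ p * (((n : ℝ) + 2) ^ (α - p) * g (n + 1) ^ (p - 1))
        ≤ c (n + 1) - c (n + 2) := by
      calc γ ^ p * (((n : ℝ) + 2) ^ (α - p) * g (n + 1) ^ (p - 1))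
          ≤ γ ^ p * (((n : ℝ) + 2) ^ (α - p) * (((n : ℝ) + 2) ^ (γ * (p - 1)) / γ ^ (p - 1))) := by
            rw [← h2]
            have hw : (0:ℝ) ≤ ((n : ℝ) + 2) ^ (α - p) := Real.rpow_nonneg hn2.le _
            have hγnn : (0:ℝ) ≤ γ ^ p := Real.rpow_nonneg hγpos.le _
            exact mul_le_mul_of_nonneg_left (mul_le_mul_of_nonneg_left h1 hw) hγnn
        _ = γ * ((n : ℝ) + 2) ^ (-γ - 1) := by
            rw [hγp, ← hsplit]
            field_simp
        _ ≤ c (n + 1) - c (n + 2) := by rw [hc1, hc2]; exact hconv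
    have hFnn : 0 ≤ F (n + 1) := by
      simp only [hFdef]
      exact div_nonneg (Real.rpow_nonneg (htnn _) _) (Real.rpow_nonneg (hgnn _) _)
    have hgppos : (0:ℝ) < g (n + 1) ^ (p - 1) := Real.rpow_pos_of_pos (hgpos n) _
    have hFval : F (n + 1) = t (n + 1) ^ p / g (n + 1) ^ (p - 1) := by simp only [hFdef]
    calc γ ^ p * (((n : ℝ) + 2) ^ (α - p) * t (n + 1) ^ p)
        = (γ ^ p * (((n : ℝ) + 2) ^ (α - p) * g (n + 1) ^ (p - 1))) * F (n + 1) := by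
          rw [hFval]
          field_simp
      _ ≤ (c (n + 1) - c (n + 2)) * F (n + 1) := mul_le_mul_of_nonneg_right star hFnn
  have step2 : ∀ n ∈ Finset.range N,
      c (n + 1) * (F (n + 1) - F n) ≤ ((n : ℝ) + 1) ^ α * b n ^ p := by
    intro n _
    have hn1 : (0:ℝ) < (n : ℝ) + 1 := by positivity
    have hccpos : (0:ℝ) < ((n : ℝ) + 1) ^ (γ - 1) := Real.rpow_pos_of_pos hn1 _
    have hbnn : 0 ≤ b n := le_trans (abs_nonneg _) (hb n)
    have hA0 : g n = 0 → t n = 0 := by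
      intro hg0
      cases n with
      | zero => exact ht0
      | succ m => exact absurd hg0 (hgpos m).ne'
    have hpic := hardy_picone hp (htnn (n + 1)) (htnn n) hccpos (hgnn n) hA0
    rw [← hgsucc n] at hpic
    have hb2 : |t (n + 1) - t n| ^ p ≤ b n ^ p :=
      Real.rpow_le_rpow (abs_nonneg _) (hb n) hp0.le
    have h3 : F (n + 1) - F n ≤ b n ^ p / (((n:ℝ) + 1) ^ (γ - 1)) ^ (p - 1) := by
      simp only [hFdef]
      refine le_trans hpic ?_
      gcongr
    have hcnn : 0 ≤ c (n + 1) := by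
      simp only [hcdef]
      positivity
    have hc1 : c (n + 1) = ((n : ℝ) + 1) ^ (-γ) := by
      simp only [hcdef]; push_cast; ring_nf
    have hccp : (((n:ℝ) + 1) ^ (γ - 1)) ^ (p - 1) = ((n:ℝ) + 1) ^ ((γ - 1) * (p - 1)) := by
      rw [← Real.rpow_mul hn1.le]
    have hαval : ((n:ℝ) + 1) ^ α = ((n:ℝ) + 1) ^ (-γ) / ((n:ℝ) + 1) ^ ((γ - 1) * (p - 1)) := by
      rw [← Real.rpow_sub hn1, hexpα]
    calc c (n + 1) * (F (n + 1) - F n)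
        ≤ c (n + 1) * (b n ^ p / (((n:ℝ) + 1) ^ (γ - 1)) ^ (p - 1)) :=
          mul_le_mul_of_nonneg_left h3 hcnn
      _ = ((n : ℝ) + 1) ^ α * b n ^ p := by
          rw [hc1, hccp, hαval]
          ring
  rw [Finset.mul_sum]
  calc ∑ n ∈ Finset.range N, γ ^ p * (((n : ℝ) + 2) ^ (α - p) * t (n + 1) ^ p)
      ≤ ∑ n ∈ Finset.range N, (c (n + 1) - c (n + 2)) * F (n + 1) :=
        Finset.sum_le_sum step1
    _ = ∑ n ∈ Finset.range N, c (n + 1) * (F (n + 1) - F n) :=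
        (hardy_abel c F N hF0 hFN).symm
    _ ≤ ∑ n ∈ Finset.range N, ((n : ℝ) + 1) ^ α * b n ^ p :=
        Finset.sum_le_sum step2

/-- Weighted discrete p-Hardy (Copson-type) inequality with negative exponent. -/
theorem weighted_p_Hardy (p α : ℝ) (hp : 1 < p) (hα : α < 0)
    (u : ℕ → ℂ) (hfin : (Function.support u).Finite) (h0 : u 0 = 0) :
    ∑' n : ℕ, ((n + 1 : ℕ) : ℝ) ^ α * ‖u (n + 1) - u n‖ ^ p ≥
      ((p - α - 1) / p) ^ p *
        ∑' n : ℕ, ((n + 2 : ℕ) : ℝ) ^ (α - p) * ‖u (n + 1)‖ ^ p := by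
  have hp0 : (0:ℝ) < p := by linarith
  obtain ⟨M, hM⟩ := hfin.bddAbove
  set N : ℕ := M + 1 with hNdef
  have hN : ∀ n, N ≤ n → u n = 0 := by
    intro n hn
    by_contra h
    have h2 : n ≤ M := hM (Function.mem_support.mpr h)
    omega
  have hL : ∑' n : ℕ, ((n + 1 : ℕ) : ℝ) ^ α * ‖u (n + 1) - u n‖ ^ p
      = ∑ n ∈ Finset.range N, ((n + 1 : ℕ) : ℝ) ^ α * ‖u (n + 1) - u n‖ ^ p := by
    apply tsum_eq_sum
    intro n hn
    have hn' : N ≤ n := Nat.le_of_not_lt fun h => hn (Finset.mem_range.mpr h)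
    rw [hN (n + 1) (by omega), hN n hn']
    simp [Real.zero_rpow hp0.ne']
  have hR : ∑' n : ℕ, ((n + 2 : ℕ) : ℝ) ^ (α - p) * ‖u (n + 1)‖ ^ p
      = ∑ n ∈ Finset.range N, ((n + 2 : ℕ) : ℝ) ^ (α - p) * ‖u (n + 1)‖ ^ p := by
    apply tsum_eq_sum
    intro n hn
    have hn' : N ≤ n := Nat.le_of_not_lt fun h => hn (Finset.mem_range.mpr h)
    rw [hN (n + 1) (by omega)]
    simp [Real.zero_rpow hp0.ne']
  rw [ge_iff_le, hL, hR]
  push_cast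
  exact hardy_core p α hp hα N (fun n => ‖u n‖)
    (fun n => ‖u (n + 1) - u n‖)
    (fun n => norm_nonneg _)
    (by simp [h0])
    (by simp [hN N le_rfl])
    (fun n => abs_norm_sub_norm_le _ _)
end

section
/- Let p > 1 and α < 0 be real numbers. The constant C_p(α) = ((p − α − 1)/p)^p in the weighted discrete p-Hardy inequality with weight (n+1)^{α−p} is optimal: the infimum, over all finitely supported sequences u : ℕ → ℂ with u_0 = 0 and u not identically zero, of the ratio (∑_{n=1}^∞ n^α |u_n − u_{n−1}|^p) / (∑_{n=1}^∞ (n+1)^{α−p} |u_n|^p) equals ((p − α − 1)/p)^p. -/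
open Finset

/-- MVT for rpow on positive reals. -/
lemma rpow_mvt {a b : ℝ} (ha : 0 < a) (hab : a < b) (r : ℝ) :
    ∃ ξ, a < ξ ∧ ξ < b ∧ b ^ r - a ^ r = r * ξ ^ (r - 1) * (b - a) := by
  have hcont : ContinuousOn (fun x : ℝ => x ^ r) (Set.Icc a b) := by
    intro x hx
    exact (Real.continuousAt_rpow_const x r (Or.inl (lt_of_lt_of_le ha hx.1).ne')).continuousWithinAt
  have hderiv : ∀ x ∈ Set.Ioo a b, HasDerivAt (fun x : ℝ => x ^ r) (r * x ^ (r - 1)) x := by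
    intro x hx
    have := Real.hasDerivAt_rpow_const (x := x) (p := r) (Or.inl (lt_trans ha hx.1).ne')
    simpa [mul_comm] using this
  obtain ⟨c, hc, hc2⟩ := exists_hasDerivAt_eq_slope (fun x : ℝ => x ^ r)
    (fun x => r * x ^ (r - 1)) hab hcont hderiv
  refine ⟨c, hc.1, hc.2, ?_⟩
  rw [eq_div_iff (by linarith : b - a ≠ 0)] at hc2
  linarith [hc2]

/-- concave tangent from the right: lower bound. `0 < r ≤ 1`. -/
lemma rpow_tangent_right_lb {a b r : ℝ} (ha : 0 ≤ a) (hab : a < b) (hr0 : 0 < r) (hr1 : r ≤ 1) :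
    r * b ^ (r - 1) * (b - a) ≤ b ^ r - a ^ r := by
  have hb : 0 < b := lt_of_le_of_lt ha hab
  rcases eq_or_lt_of_le ha with h0 | ha'
  · rw [← h0, Real.zero_rpow hr0.ne', sub_zero, sub_zero]
    have hbb : b ^ (r - 1) * b = b ^ r := by
      rw [← Real.rpow_add_one hb.ne']; norm_num
    rw [mul_assoc, hbb]
    nlinarith [Real.rpow_pos_of_pos hb r]
  · obtain ⟨ξ, hξ1, hξ2, heq⟩ := rpow_mvt ha' hab r
    have h2 : b ^ (r - 1) ≤ ξ ^ (r - 1) :=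
      Real.rpow_le_rpow_of_nonpos (lt_trans ha' hξ1) hξ2.le (by linarith)
    have key := mul_le_mul_of_nonneg_left h2 (by nlinarith : (0:ℝ) ≤ r * (b - a))
    nlinarith [key, heq]

/-- convex tangent from the left: lower bound. `1 ≤ r`. -/
lemma rpow_tangent_left_lb {a b r : ℝ} (ha : 0 < a) (hab : a < b) (hr : 1 ≤ r) :
    r * a ^ (r - 1) * (b - a) ≤ b ^ r - a ^ r := by
  obtain ⟨ξ, hξ1, hξ2, heq⟩ := rpow_mvt ha hab r
  have h2 : a ^ (r - 1) ≤ ξ ^ (r - 1) := Real.rpow_le_rpow ha.le hξ1.le (by linarith)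
  have key := mul_le_mul_of_nonneg_left h2 (by nlinarith : (0:ℝ) ≤ r * (b - a))
  nlinarith [key, heq]

/-- negative exponent: tangent from the right. `r < 0`. -/
lemma rpow_tangent_neg {a b r : ℝ} (ha : 0 < a) (hab : a < b) (hr : r < 0) :
    (-r) * b ^ (r - 1) * (b - a) ≤ a ^ r - b ^ r := by
  obtain ⟨ξ, hξ1, hξ2, heq⟩ := rpow_mvt ha hab r
  have h2 : b ^ (r - 1) ≤ ξ ^ (r - 1) :=
    Real.rpow_le_rpow_of_nonpos (lt_trans ha hξ1) hξ2.le (by linarith)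
  have key := mul_le_mul_of_nonneg_left h2 (by nlinarith : (0:ℝ) ≤ (-r) * (b - a))
  nlinarith [key, heq]

/-- convex tangent from the right: upper bound. `1 ≤ r`. -/
lemma rpow_tangent_right_ub {a b r : ℝ} (ha : 0 ≤ a) (hab : a < b) (hr : 1 ≤ r) :
    b ^ r - a ^ r ≤ r * b ^ (r - 1) * (b - a) := by
  have hb : 0 < b := lt_of_le_of_lt ha hab
  rcases eq_or_lt_of_le ha with h0 | ha'
  · rw [← h0, Real.zero_rpow (by linarith : r ≠ 0), sub_zero, sub_zero]
    have hbb : b ^ (r - 1) * b = b ^ r := by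
      rw [← Real.rpow_add_one hb.ne']; norm_num
    rw [mul_assoc, hbb]
    nlinarith [Real.rpow_pos_of_pos hb r]
  · obtain ⟨ξ, hξ1, hξ2, heq⟩ := rpow_mvt ha' hab r
    have h2 : ξ ^ (r - 1) ≤ b ^ (r - 1) := Real.rpow_le_rpow (by linarith) hξ2.le (by linarith)
    have key := mul_le_mul_of_nonneg_left h2 (by nlinarith : (0:ℝ) ≤ r * (b - a))
    nlinarith [key, heq]

/-- concave tangent from the left: upper bound. `0 < r ≤ 1`. -/
lemma rpow_tangent_left_ub {a b r : ℝ} (ha : 0 < a) (hab : a < b) (hr0 : 0 < r) (hr1 : r ≤ 1) :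
    b ^ r - a ^ r ≤ r * a ^ (r - 1) * (b - a) := by
  obtain ⟨ξ, hξ1, hξ2, heq⟩ := rpow_mvt ha hab r
  have h2 : ξ ^ (r - 1) ≤ a ^ (r - 1) :=
    Real.rpow_le_rpow_of_nonpos ha hξ1.le (by linarith)
  have key := mul_le_mul_of_nonneg_left h2 (by nlinarith : (0:ℝ) ≤ r * (b - a))
  nlinarith [key, heq]

lemma sum_telescope_le {k : ℕ} (g f : ℕ → ℝ) (hf : ∀ n, k ≤ n → f n ≤ g n - g (n + 1)) :
    ∀ M, k ≤ M + 1 → ∑ n ∈ Icc k M, f n ≤ g k - g (M + 1) := by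
  intro M
  induction M with
  | zero =>
    intro hk
    interval_cases k
    · simpa using hf 0 le_rfl
    · simp
  | succ M ih =>
    intro hk
    rcases Nat.lt_or_ge (M + 1) k with h | h
    · have : k = M + 2 := le_antisymm hk h
      subst this
      simp
    · rw [Finset.sum_Icc_succ_top h]
      have := hf (M + 1) h
      have := ih h
      linarith

/-- `∑_{k=1}^n k^c ≤ (n+1)^(1+c)/(1+c)` for `c > -1`. -/
lemma sum_rpow_le {c : ℝ} (hc : -1 < c) (n : ℕ) :
    ∑ k ∈ Icc 1 n, (k : ℝ) ^ c ≤ ((n : ℝ) + 1) ^ (1 + c) / (1 + c) := by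
  have h1c : 0 < 1 + c := by linarith
  rcases le_or_gt c 0 with hc0 | hc0
  · have main : ∀ m : ℕ, ∑ k ∈ Icc 1 m, (k : ℝ) ^ c ≤ (m : ℝ) ^ (1 + c) / (1 + c) := by
      intro m
      induction m with
      | zero => simp [Real.zero_rpow h1c.ne']
      | succ m ih =>
        rw [Finset.sum_Icc_succ_top (by omega : 1 ≤ m + 1)]
        have tang : (1 + c) * ((m : ℝ) + 1) ^ ((1 + c) - 1) * (((m : ℝ) + 1) - m) ≤
            ((m : ℝ) + 1) ^ (1 + c) - (m : ℝ) ^ (1 + c) :=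
          rpow_tangent_right_lb (Nat.cast_nonneg m) (by linarith) h1c (by linarith)
        have hsimp : ((1 + c) - 1 : ℝ) = c := by ring
        rw [hsimp] at tang
        push_cast
        rw [le_div_iff₀ h1c]
        have ih' := (le_div_iff₀ h1c).1 ih
        linarith
    calc ∑ k ∈ Icc 1 n, (k : ℝ) ^ c ≤ (n : ℝ) ^ (1 + c) / (1 + c) := main n
      _ ≤ ((n : ℝ) + 1) ^ (1 + c) / (1 + c) := by
          exact div_le_div_of_nonneg_right
            (Real.rpow_le_rpow (Nat.cast_nonneg n) (by linarith) h1c.le) h1c.le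
  · induction n with
    | zero =>
      rw [show (Icc 1 0 : Finset ℕ) = ∅ from rfl]
      simp only [Finset.sum_empty, Nat.cast_zero, zero_add]
      positivity
    | succ n ih =>
      rw [Finset.sum_Icc_succ_top (by omega : 1 ≤ n + 1)]
      have tang : (1 + c) * ((n : ℝ) + 1) ^ ((1 + c) - 1) * (((n : ℝ) + 2) - ((n : ℝ) + 1)) ≤
          ((n : ℝ) + 2) ^ (1 + c) - ((n : ℝ) + 1) ^ (1 + c) :=
        rpow_tangent_left_lb (by positivity) (by linarith) (by linarith)
      have hsimp : ((1 + c) - 1 : ℝ) = c := by ring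
      rw [hsimp] at tang
      push_cast
      have h2 : ((n:ℝ) + 1 + 1) = ((n:ℝ) + 2) := by ring
      rw [h2, le_div_iff₀ h1c]
      have ih' := (le_div_iff₀ h1c).1 ih
      linarith

/-- `∑_{n=k}^M (n+1)^e ≤ k^(e+1)/(-(e+1))` for `e < -1`. -/
lemma tail_rpow_le {e : ℝ} (he : e < -1) {k : ℕ} (hk : 1 ≤ k) (M : ℕ) :
    ∑ n ∈ Icc k M, ((n : ℝ) + 1) ^ e ≤ (k : ℝ) ^ (e + 1) / (-(e + 1)) := by
  have hne : (0:ℝ) < -(e+1) := by linarith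
  have hgpos : ∀ n : ℕ, 1 ≤ n → 0 ≤ ((n:ℝ)) ^ (e+1) / (-(e+1)) := by
    intro n hn
    have : (0:ℝ) < n := by exact_mod_cast hn
    positivity
  rcases Nat.lt_or_ge M k with h | h
  · rw [Finset.Icc_eq_empty (by omega)]
    simpa using hgpos k hk
  · have key := sum_telescope_le (k := k) (fun n => (n:ℝ) ^ (e+1) / (-(e+1)))
      (fun n => ((n:ℝ) + 1) ^ e) ?_ M (by omega)
    · have hg1 := hgpos (M+1) (by omega)
      push_cast at key hg1 ⊢
      linarith
    · intro n hn
      have hn' : (0:ℝ) < n := by exact_mod_cast lt_of_lt_of_le Nat.zero_lt_one (le_trans hk hn)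
      have tang : (-(e+1)) * ((n:ℝ) + 1) ^ ((e+1) - 1) * (((n:ℝ)+1) - n) ≤
          (n:ℝ) ^ (e+1) - ((n:ℝ)+1) ^ (e+1) :=
        rpow_tangent_neg hn' (by linarith) (by linarith)
      have hsimp : ((e+1) - 1 : ℝ) = e := by ring
      rw [hsimp] at tang
      push_cast
      rw [div_sub_div_same, le_div_iff₀ hne]
      nlinarith [tang]

lemma log_diff_le {x : ℝ} (hx : 0 < x) : Real.log (x + 1) - Real.log x ≤ 1 / x := by
  have h := Real.log_le_sub_one_of_pos (show (0:ℝ) < (x+1)/x by positivity)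
  rw [Real.log_div (by linarith) hx.ne'] at h
  have : (x + 1) / x - 1 = 1 / x := by field_simp; ring
  linarith [this ▸ h]

lemma le_log_diff {x : ℝ} (hx : 0 < x) : 1 / (x + 1) ≤ Real.log (x + 1) - Real.log x := by
  have h := Real.log_le_sub_one_of_pos (show (0:ℝ) < x/(x+1) by positivity)
  rw [Real.log_div hx.ne' (by linarith)] at h
  have : x / (x + 1) - 1 = -(1 / (x+1)) := by field_simp; ring
  linarith [this ▸ h]

lemma harmonic_upper (n : ℕ) (hn : 1 ≤ n) :
    ∑ k ∈ Icc 1 n, (1 : ℝ) / k ≤ 1 + Real.log n := by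
  induction n with
  | zero => omega
  | succ n ih =>
    rcases Nat.eq_or_lt_of_le hn with h | h
    · simp [← h]
    · have hn1 : 1 ≤ n := by omega
      rw [Finset.sum_Icc_succ_top hn]
      have hlog := log_diff_le (show (0:ℝ) < n by exact_mod_cast hn1)
      have hmono : 1 / ((n:ℝ) + 1) ≤ 1 / (n:ℝ) := by
        apply one_div_le_one_div_of_le (by exact_mod_cast hn1) (by linarith)
      push_cast
      have := ih hn1
      calc ∑ k ∈ Icc 1 n, (1:ℝ)/k + 1/((n:ℝ)+1)
          ≤ (1 + Real.log n) + (Real.log ((n:ℝ)+1) - Real.log n) := by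
            have h2 : 1 / ((n:ℝ)+1) ≤ Real.log ((n:ℝ)+1) - Real.log n :=
              le_log_diff (show (0:ℝ) < n by exact_mod_cast hn1)
            linarith
        _ = 1 + Real.log ((n:ℝ)+1) := by ring

lemma harmonic_lower (n : ℕ) :
    Real.log ((n : ℝ) + 2) - Real.log 2 ≤ ∑ m ∈ Icc 1 n, (1 : ℝ) / ((m : ℝ) + 1) := by
  induction n with
  | zero => simp
  | succ n ih =>
    rw [Finset.sum_Icc_succ_top (by omega : 1 ≤ n + 1)]
    have h2 : Real.log ((n:ℝ)+2+1) - Real.log ((n:ℝ)+2) ≤ 1 / ((n:ℝ) + 2) := by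
      exact log_diff_le (show (0:ℝ) < (n:ℝ)+2 by positivity)
    push_cast
    push_cast at ih
    have he : ((n:ℝ) + 1 + 2) = ((n:ℝ)+2+1) := by ring
    rw [he]
    have he2 : ((n:ℝ) + 1 + 1) = ((n:ℝ)+2) := by ring
    rw [he2]
    linarith

lemma sq_inv_sum_le (n : ℕ) :
    ∑ m ∈ Icc 1 n, (1 : ℝ) / ((m : ℝ) + 1) ^ (2:ℕ) ≤ 1 := by
  rcases Nat.lt_or_ge n 1 with h | h
  · interval_cases n
    simp
  · have key := sum_telescope_le (k := 1) (fun m => (1:ℝ) / m)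
      (fun m => (1:ℝ) / ((m:ℝ) + 1) ^ (2:ℕ)) ?_ n (by omega)
    · simp only [Nat.cast_one] at key
      have hpos : (0:ℝ) ≤ 1 / ((n:ℝ)+1) := by positivity
      push_cast at key
      linarith
    · intro m hm
      have hm' : (0:ℝ) < m := by exact_mod_cast hm
      push_cast
      have hkey : ((1:ℝ)/m - 1/((m:ℝ)+1)) = 1 / (m * ((m:ℝ)+1)) := by
        field_simp; ring
      rw [hkey]
      apply one_div_le_one_div_of_le (by positivity)
      nlinarith

lemma sum_triangle_swap (M : ℕ) (F : ℕ → ℕ → ℝ) :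
    ∑ m ∈ Icc 1 M, ∑ k ∈ Icc 1 m, F m k = ∑ k ∈ Icc 1 M, ∑ m ∈ Icc k M, F m k :=
  Finset.sum_comm' (by intro m k; simp only [mem_Icc]; omega)

lemma hardy_fin {p s : ℝ} (hp : 1 < p) (hs : p < s) (M : ℕ) (b : ℕ → ℝ) (hb : ∀ k, 0 ≤ b k) :
    ∑ m ∈ Icc 1 M, ((m:ℝ)+1) ^ (-s) * (∑ k ∈ Icc 1 m, b k) ^ p
      ≤ (p/(s-1)) ^ p * ∑ k ∈ Icc 1 M, (k:ℝ) ^ (p - s) * b k ^ p := by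
  have hp0 : 0 < p := by linarith
  set q : ℝ := p / (p - 1) with hqdef
  have hpq : p.HolderConjugate q := Real.HolderConjugate.conjExponent hp
  have hq0 : q ≠ 0 := hpq.symm.ne_zero
  set τ : ℝ := (p + 1 - s) / p with hτdef
  have h1τ : 1 - τ = (s - 1) / p := by rw [hτdef]; field_simp; ring
  have h1τpos : 0 < 1 - τ := by rw [h1τ]; apply div_pos <;> linarith
  have hτlt : τ < 1 := by linarith
  have hpq' : p / q = p - 1 := by rw [hqdef]; field_simp
  set σ : ℝ := τ * (p - 1) with hσdef
  set e : ℝ := (1 - τ) * (p - 1) - s with hedef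
  have he1 : e + 1 = -((s-1)/p) := by
    rw [hedef, h1τ]; field_simp; ring
  clear_value q τ σ e
  have he2 : e < -1 := by
    have : (0:ℝ) < (s-1)/p := by apply div_pos <;> linarith
    linarith [he1, this]
  -- per-m Hölder estimate
  have key : ∀ m, 1 ≤ m → (∑ k ∈ Icc 1 m, b k) ^ p ≤
      (1-τ) ^ (1-p) * (((m:ℝ)+1) ^ ((1-τ)*(p-1)) * ∑ k ∈ Icc 1 m, b k ^ p * (k:ℝ) ^ σ) := by
    intro m hm
    have hXnn : (0:ℝ) ≤ ∑ k ∈ Icc 1 m, b k ^ p * (k:ℝ) ^ σ :=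
      Finset.sum_nonneg fun k _ => mul_nonneg (Real.rpow_nonneg (hb k) p) (Real.rpow_nonneg (Nat.cast_nonneg k) σ)
    have hYnn : (0:ℝ) ≤ ∑ k ∈ Icc 1 m, (k:ℝ) ^ (-τ) :=
      Finset.sum_nonneg fun k _ => Real.rpow_nonneg (Nat.cast_nonneg k) (-τ)
    have hold := Real.inner_le_Lp_mul_Lq (Icc 1 m)
      (fun k => b k * (k:ℝ) ^ (τ/q)) (fun k => (k:ℝ) ^ (-(τ/q))) hpq
    -- rewrite the three sums in hold
    have hL : ∑ k ∈ Icc 1 m, (b k * (k:ℝ) ^ (τ/q)) * ((k:ℝ) ^ (-(τ/q)))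
        = ∑ k ∈ Icc 1 m, b k := by
      apply Finset.sum_congr rfl
      intro k hk
      have hk1 : (0:ℝ) < k := by
        have := (mem_Icc.1 hk).1; exact_mod_cast this
      rw [mul_assoc, ← Real.rpow_add hk1]
      simp
    have hF : ∑ k ∈ Icc 1 m, |b k * (k:ℝ) ^ (τ/q)| ^ p
        = ∑ k ∈ Icc 1 m, b k ^ p * (k:ℝ) ^ σ := by
      apply Finset.sum_congr rfl
      intro k hk
      have hk0 : (0:ℝ) ≤ k := Nat.cast_nonneg k
      rw [abs_of_nonneg (mul_nonneg (hb k) (Real.rpow_nonneg hk0 _))]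
      rw [Real.mul_rpow (hb k) (Real.rpow_nonneg hk0 _), ← Real.rpow_mul hk0]
      congr 1
      rw [hσdef, div_mul_eq_mul_div, mul_div_assoc, hpq']
    have hG : ∑ k ∈ Icc 1 m, |(k:ℝ) ^ (-(τ/q))| ^ q
        = ∑ k ∈ Icc 1 m, (k:ℝ) ^ (-τ) := by
      apply Finset.sum_congr rfl
      intro k hk
      have hk0 : (0:ℝ) ≤ k := Nat.cast_nonneg k
      rw [abs_of_nonneg (Real.rpow_nonneg hk0 _), ← Real.rpow_mul hk0]
      congr 1
      field_simp
    rw [hL, hF, hG] at hold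
    have hA : (0:ℝ) ≤ ∑ k ∈ Icc 1 m, b k := Finset.sum_nonneg fun k _ => hb k
    have hAp := Real.rpow_le_rpow hA hold hp0.le
    have hexp : ((∑ k ∈ Icc 1 m, b k ^ p * (k:ℝ) ^ σ) ^ (1/p)
        * (∑ k ∈ Icc 1 m, (k:ℝ) ^ (-τ)) ^ (1/q)) ^ p
        = (∑ k ∈ Icc 1 m, b k ^ p * (k:ℝ) ^ σ)
          * ((∑ k ∈ Icc 1 m, (k:ℝ) ^ (-τ)) ^ (p-1)) := by
      rw [Real.mul_rpow (Real.rpow_nonneg hXnn _) (Real.rpow_nonneg hYnn _),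
        ← Real.rpow_mul hXnn, ← Real.rpow_mul hYnn]
      rw [one_div_mul_cancel hp0.ne', Real.rpow_one]
      congr 1
      rw [div_mul_eq_mul_div, one_mul, hpq']
    rw [hexp] at hAp
    -- bound the Y-factor
    have hYb : (∑ k ∈ Icc 1 m, (k:ℝ) ^ (-τ)) ≤ ((m:ℝ)+1) ^ (1-τ) / (1-τ) := by
      have := sum_rpow_le (c := -τ) (by linarith) m
      rw [show (1 + -τ : ℝ) = 1 - τ by ring] at this
      exact this
    have hY2 : (∑ k ∈ Icc 1 m, (k:ℝ) ^ (-τ)) ^ (p-1)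
        ≤ ((m:ℝ)+1) ^ ((1-τ)*(p-1)) * ((1-τ) ^ (p-1))⁻¹ := by
      calc (∑ k ∈ Icc 1 m, (k:ℝ) ^ (-τ)) ^ (p-1)
          ≤ (((m:ℝ)+1) ^ (1-τ) / (1-τ)) ^ (p-1) :=
            Real.rpow_le_rpow hYnn hYb (by linarith)
        _ = ((m:ℝ)+1) ^ ((1-τ)*(p-1)) * ((1-τ) ^ (p-1))⁻¹ := by
            rw [Real.div_rpow (Real.rpow_nonneg (by positivity) _) h1τpos.le,
              ← Real.rpow_mul (by positivity), div_eq_mul_inv]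
    have h1τ1p : ((1-τ) ^ (p-1))⁻¹ = (1-τ) ^ (1-p) := by
      rw [← Real.rpow_neg h1τpos.le, show (-(p-1) : ℝ) = 1 - p by ring]
    calc (∑ k ∈ Icc 1 m, b k) ^ p
        ≤ (∑ k ∈ Icc 1 m, b k ^ p * (k:ℝ) ^ σ)
          * ((∑ k ∈ Icc 1 m, (k:ℝ) ^ (-τ)) ^ (p-1)) := hAp
      _ ≤ (∑ k ∈ Icc 1 m, b k ^ p * (k:ℝ) ^ σ)
          * (((m:ℝ)+1) ^ ((1-τ)*(p-1)) * ((1-τ) ^ (p-1))⁻¹) :=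
            mul_le_mul_of_nonneg_left hY2 hXnn
      _ = (1-τ) ^ (1-p) * (((m:ℝ)+1) ^ ((1-τ)*(p-1)) * ∑ k ∈ Icc 1 m, b k ^ p * (k:ℝ) ^ σ) := by
            rw [h1τ1p]; ring
  -- main chain
  have step1 : ∑ m ∈ Icc 1 M, ((m:ℝ)+1) ^ (-s) * (∑ k ∈ Icc 1 m, b k) ^ p
      ≤ (1-τ) ^ (1-p) * ∑ m ∈ Icc 1 M, ∑ k ∈ Icc 1 m, ((m:ℝ)+1) ^ e * (b k ^ p * (k:ℝ) ^ σ) := by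
    rw [Finset.mul_sum]
    apply Finset.sum_le_sum
    intro m hm
    have hm1 := (mem_Icc.1 hm).1
    have hmpos : (0:ℝ) < (m:ℝ) + 1 := by positivity
    have := mul_le_mul_of_nonneg_left (key m hm1)
      (Real.rpow_nonneg hmpos.le (-s) : (0:ℝ) ≤ ((m:ℝ)+1) ^ (-s))
    calc ((m:ℝ)+1) ^ (-s) * (∑ k ∈ Icc 1 m, b k) ^ p
        ≤ ((m:ℝ)+1) ^ (-s) * ((1-τ) ^ (1-p) * (((m:ℝ)+1) ^ ((1-τ)*(p-1))
            * ∑ k ∈ Icc 1 m, b k ^ p * (k:ℝ) ^ σ)) := this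
      _ = (1-τ) ^ (1-p) * ∑ k ∈ Icc 1 m, ((m:ℝ)+1) ^ e * (b k ^ p * (k:ℝ) ^ σ) := by
          rw [← Finset.mul_sum]
          have heq : ((m:ℝ)+1) ^ e = ((m:ℝ)+1) ^ ((1-τ)*(p-1)) * ((m:ℝ)+1) ^ (-s) := by
            rw [← Real.rpow_add hmpos]
            congr 1
          rw [heq]; ring
  have step2 : ∑ m ∈ Icc 1 M, ∑ k ∈ Icc 1 m, ((m:ℝ)+1) ^ e * (b k ^ p * (k:ℝ) ^ σ)
      = ∑ k ∈ Icc 1 M, (b k ^ p * (k:ℝ) ^ σ) * ∑ m ∈ Icc k M, ((m:ℝ)+1) ^ e := by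
    rw [sum_triangle_swap M (fun m k => ((m:ℝ)+1) ^ e * (b k ^ p * (k:ℝ) ^ σ))]
    apply Finset.sum_congr rfl
    intro k hk
    rw [Finset.mul_sum]
    apply Finset.sum_congr rfl
    intro m hm
    ring
  have step3 : ∑ k ∈ Icc 1 M, (b k ^ p * (k:ℝ) ^ σ) * ∑ m ∈ Icc k M, ((m:ℝ)+1) ^ e
      ≤ ∑ k ∈ Icc 1 M, (b k ^ p * (k:ℝ) ^ σ) * ((k:ℝ) ^ (e+1) / (-(e+1))) := by
    apply Finset.sum_le_sum
    intro k hk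
    have hk1 := (mem_Icc.1 hk).1
    apply mul_le_mul_of_nonneg_left (tail_rpow_le he2 hk1 M)
    exact mul_nonneg (Real.rpow_nonneg (hb k) p) (Real.rpow_nonneg (Nat.cast_nonneg k) σ)
  have hne : -(e+1) = 1 - τ := by rw [he1, h1τ]; ring
  have step4 : ∑ k ∈ Icc 1 M, (b k ^ p * (k:ℝ) ^ σ) * ((k:ℝ) ^ (e+1) / (-(e+1)))
      = (1-τ)⁻¹ * ∑ k ∈ Icc 1 M, (k:ℝ) ^ (p-s) * b k ^ p := by
    rw [Finset.mul_sum]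
    apply Finset.sum_congr rfl
    intro k hk
    have hk1 := (mem_Icc.1 hk).1
    have hkpos : (0:ℝ) < k := by exact_mod_cast hk1
    have hkk : (k:ℝ) ^ σ * (k:ℝ) ^ (e+1) = (k:ℝ) ^ (p-s) := by
      rw [← Real.rpow_add hkpos]
      congr 1
      rw [he1, hσdef, hτdef]
      field_simp
      ring
    rw [hne, div_eq_mul_inv]
    calc b k ^ p * (k:ℝ) ^ σ * ((k:ℝ) ^ (e+1) * (1-τ)⁻¹)
        = (1-τ)⁻¹ * ((k:ℝ) ^ σ * (k:ℝ) ^ (e+1) * b k ^ p) := by ring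
      _ = (1-τ)⁻¹ * ((k:ℝ) ^ (p-s) * b k ^ p) := by rw [hkk]
  have hconst : (1-τ) ^ (1-p) * (1-τ)⁻¹ = (p/(s-1)) ^ p := by
    rw [← Real.rpow_neg_one (1-τ), ← Real.rpow_add h1τpos,
      show (1 - p + -1 : ℝ) = -p by ring, h1τ,
      Real.rpow_neg (le_of_lt (by apply div_pos <;> linarith)), ← Real.inv_rpow
        (le_of_lt (by apply div_pos <;> linarith)), inv_div]
  calc ∑ m ∈ Icc 1 M, ((m:ℝ)+1) ^ (-s) * (∑ k ∈ Icc 1 m, b k) ^ p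
      ≤ (1-τ) ^ (1-p) * ∑ m ∈ Icc 1 M, ∑ k ∈ Icc 1 m, ((m:ℝ)+1) ^ e * (b k ^ p * (k:ℝ) ^ σ) := step1
    _ = (1-τ) ^ (1-p) * ∑ k ∈ Icc 1 M, (b k ^ p * (k:ℝ) ^ σ) * ∑ m ∈ Icc k M, ((m:ℝ)+1) ^ e := by
        rw [step2]
    _ ≤ (1-τ) ^ (1-p) * ∑ k ∈ Icc 1 M, (b k ^ p * (k:ℝ) ^ σ) * ((k:ℝ) ^ (e+1) / (-(e+1))) :=
        mul_le_mul_of_nonneg_left step3 (Real.rpow_nonneg h1τpos.le _)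
    _ = (1-τ) ^ (1-p) * ((1-τ)⁻¹ * ∑ k ∈ Icc 1 M, (k:ℝ) ^ (p-s) * b k ^ p) := by rw [step4]
    _ = (p/(s-1)) ^ p * ∑ k ∈ Icc 1 M, (k:ℝ) ^ (p-s) * b k ^ p := by
        rw [← mul_assoc, hconst]

lemma abs_le_sum_b (u : ℕ → ℂ) (h0 : u 0 = 0) (m : ℕ) :
    ‖u m‖ ≤ ∑ k ∈ Icc 1 m, ‖u k - u (k-1)‖ := by
  induction m with
  | zero => simp [h0]
  | succ m ih =>
    rw [Finset.sum_Icc_succ_top (by omega : 1 ≤ m + 1)]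
    have htri : ‖u (m+1)‖ ≤ ‖u m‖ + ‖u (m+1) - u m‖ := by
      calc ‖u (m+1)‖ = ‖u m + (u (m+1) - u m)‖ := by ring_nf
        _ ≤ ‖u m‖ + ‖u (m+1) - u m‖ := norm_add_le _ _
    simp only [Nat.add_sub_cancel]
    linarith

lemma lower_bound {p α : ℝ} (hp : 1 < p) (hα : α < 0) (u : ℕ → ℂ)
    (hfin : (Function.support u).Finite) (h0 : u 0 = 0) :
    ((p - α - 1) / p) ^ p * (∑' n : ℕ, ((n + 2 : ℕ) : ℝ) ^ (α - p) * ‖u (n + 1)‖ ^ p)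
      ≤ ∑' n : ℕ, ((n + 1 : ℕ) : ℝ) ^ α * ‖u (n + 1) - u n‖ ^ p := by
  have hp0 : 0 < p := by linarith
  classical
  set N : ℕ := (hfin.toFinset.sup id) + 1 with hN
  have hzero : ∀ n, N ≤ n → u n = 0 := by
    intro n hn
    by_contra h
    have : n ∈ hfin.toFinset := by simpa [Function.mem_support] using h
    have := Finset.le_sup (f := id) this
    simp only [id] at this
    omega
  set b : ℕ → ℝ := fun k => ‖u k - u (k-1)‖ with hb
  have hbnn : ∀ k, 0 ≤ b k := fun k => norm_nonneg _
  -- numerator as a finite sum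
  have hnum : ∑' n : ℕ, ((n + 1 : ℕ) : ℝ) ^ α * ‖u (n + 1) - u n‖ ^ p
      = ∑ k ∈ Icc 1 N, (k : ℝ) ^ α * b k ^ p := by
    rw [tsum_eq_sum (s := Finset.range N) ?_]
    · rw [← Finset.Ico_add_one_right_eq_Icc, Finset.sum_Ico_eq_sum_range]
      try simp only [Nat.add_sub_cancel]
      apply Finset.sum_congr rfl
      intro n _
      rw [hb]
      simp only [Nat.add_sub_cancel, add_comm 1 n]
      try norm_num
    · intro n hn
      have hn' : N ≤ n := by simpa using hn
      rw [hzero n hn', hzero (n+1) (by omega)]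
      simp [Real.zero_rpow hp0.ne']
  -- denominator as a finite sum
  have hden : ∑' n : ℕ, ((n + 2 : ℕ) : ℝ) ^ (α - p) * ‖u (n + 1)‖ ^ p
      = ∑ m ∈ Icc 1 N, ((m : ℝ) + 1) ^ (α - p) * ‖u m‖ ^ p := by
    rw [tsum_eq_sum (s := Finset.range N) ?_]
    · rw [← Finset.Ico_add_one_right_eq_Icc, Finset.sum_Ico_eq_sum_range]
      try simp only [Nat.add_sub_cancel]
      apply Finset.sum_congr rfl
      intro n _
      rw [add_comm 1 n]
      push_cast
      ring_nf
    · intro n hn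
      have hn' : N ≤ n := by simpa using hn
      rw [hzero (n+1) (by omega)]
      simp [Real.zero_rpow hp0.ne']
  rw [hnum, hden]
  set s : ℝ := p - α with hs
  have hps : p < s := by rw [hs]; linarith
  have hden2 : ∑ m ∈ Icc 1 N, ((m : ℝ) + 1) ^ (α - p) * ‖u m‖ ^ p
      ≤ ∑ m ∈ Icc 1 N, ((m : ℝ) + 1) ^ (-s) * (∑ k ∈ Icc 1 m, b k) ^ p := by
    apply Finset.sum_le_sum
    intro m hm
    have h1 : (α - p : ℝ) = -s := by rw [hs]; ring
    rw [h1]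
    apply mul_le_mul_of_nonneg_left ?_ (Real.rpow_nonneg (by positivity) _)
    exact Real.rpow_le_rpow (norm_nonneg _) (abs_le_sum_b u h0 m) hp0.le
  have hhardy := hardy_fin hp hps N b hbnn
  have hnum2 : ∑ k ∈ Icc 1 N, (k:ℝ) ^ (p - s) * b k ^ p = ∑ k ∈ Icc 1 N, (k:ℝ) ^ α * b k ^ p := by
    apply Finset.sum_congr rfl
    intro k _
    congr 2
    rw [hs]; ring
  rw [hnum2] at hhardy
  have hs1 : (0:ℝ) < s - 1 := by rw [hs]; linarith
  have hqpos : (0:ℝ) < (p - α - 1) / p := div_pos (by linarith) hp0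
  have hCK : ((p - α - 1) / p) ^ p * (p / (s-1)) ^ p = 1 := by
    rw [← Real.mul_rpow hqpos.le (div_pos hp0 hs1).le]
    have hne : p - α - 1 ≠ 0 := by linarith
    rw [show ((p - α - 1) / p) * (p / (s-1)) = 1 by rw [hs]; field_simp]
    exact Real.one_rpow p
  calc ((p - α - 1) / p) ^ p * ∑ m ∈ Icc 1 N, ((m : ℝ) + 1) ^ (α - p) * ‖u m‖ ^ p
      ≤ ((p - α - 1) / p) ^ p * ∑ m ∈ Icc 1 N, ((m : ℝ) + 1) ^ (-s) * (∑ k ∈ Icc 1 m, b k) ^ p :=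
        mul_le_mul_of_nonneg_left hden2 (Real.rpow_nonneg hqpos.le _)
    _ ≤ ((p - α - 1) / p) ^ p * ((p / (s-1)) ^ p * ∑ k ∈ Icc 1 N, (k:ℝ) ^ α * b k ^ p) :=
        mul_le_mul_of_nonneg_left hhardy (Real.rpow_nonneg hqpos.le _)
    _ = ∑ k ∈ Icc 1 N, (k:ℝ) ^ α * b k ^ p := by rw [← mul_assoc, hCK, one_mul]

lemma upper_bound {p α : ℝ} (hp : 1 < p) (hα : α < 0) (N : ℕ) (hN : 1 ≤ N) :
    ∃ u : ℕ → ℂ, (Function.support u).Finite ∧ u 0 = 0 ∧ u ≠ 0 ∧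
      (∑' n : ℕ, ((n + 1 : ℕ) : ℝ) ^ α * ‖u (n + 1) - u n‖ ^ p) ≤
        2 + ((p - α - 1)/p) ^ p * (1 + Real.log N) ∧
      Real.log N - (1 + max (p - α - 1) 1) ≤
        ∑' n : ℕ, ((n + 2 : ℕ) : ℝ) ^ (α - p) * ‖u (n + 1)‖ ^ p := by
  have hp0 : 0 < p := by linarith
  set γ : ℝ := (p - α - 1) / p with hγdef
  have hγpos : 0 < γ := div_pos (by linarith) hp0
  have hγp : γ * p = p - α - 1 := by rw [hγdef]; field_simp
  have hNR : (0:ℝ) < N := by exact_mod_cast hN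
  set f : ℕ → ℝ := fun n =>
    if n ≤ N then (n:ℝ) ^ γ else (if n ≤ 2*N then (N:ℝ) ^ (γ-1) * (2*(N:ℝ) - (n:ℝ)) else 0)
    with hfdef
  set u : ℕ → ℂ := fun n => ((f n : ℝ) : ℂ) with hudef
  have hfz : ∀ n, 2*N ≤ n → f n = 0 := by
    intro n hn
    rw [hfdef]
    simp only
    rw [if_neg (by omega)]
    rcases Nat.eq_or_lt_of_le hn with h | h
    · rw [if_pos (by omega)]
      rw [← h]
      push_cast
      ring
    · rw [if_neg (by omega)]
  have hsupp : (Function.support u).Finite := by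
    apply (Finset.range (2*N)).finite_toSet.subset
    intro n hn
    simp only [Function.mem_support, hudef] at hn
    simp only [Finset.coe_range, Set.mem_Iio]
    by_contra h
    exact hn (by rw [hfz n (by omega)]; exact Complex.ofReal_zero)
  have hf0 : f 0 = 0 := by
    rw [hfdef]; simp only [if_pos (Nat.zero_le N)]
    exact Real.zero_rpow hγpos.ne' |>.symm ▸ by norm_num [Real.zero_rpow hγpos.ne']
  have hu0 : u 0 = 0 := by rw [hudef]; simp [hf0]
  have hf1 : f 1 = 1 := by
    rw [hfdef]; simp only [if_pos hN]
    norm_num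
  have hune : u ≠ 0 := by
    intro h
    have := congrFun h 1
    rw [hudef] at this
    simp only [hf1] at this
    norm_num at this
  have habs : ∀ x : ℝ, ‖((x:ℝ):ℂ)‖ = |x| := fun x => by rw [Complex.norm_real, Real.norm_eq_abs]
  refine ⟨u, hsupp, hu0, hune, ?_, ?_⟩
  · -- numerator bound
    have hnum_eq : ∑' n : ℕ, ((n + 1 : ℕ) : ℝ) ^ α * ‖u (n + 1) - u n‖ ^ p
        = ∑ k ∈ Icc 1 (2*N), (k : ℝ) ^ α * |f k - f (k-1)| ^ p := by
      rw [tsum_eq_sum (s := Finset.range (2*N)) ?_]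
      · rw [← Finset.Ico_add_one_right_eq_Icc, Finset.sum_Ico_eq_sum_range]
        try simp only [Nat.add_sub_cancel]
        apply Finset.sum_congr rfl
        intro n _
        rw [hudef]
        simp only [add_comm 1 n, Nat.add_sub_cancel]
        rw [← Complex.ofReal_sub, Complex.norm_real, Real.norm_eq_abs]
        try norm_num
      · intro n hn
        have hn' : 2*N ≤ n := by simpa using hn
        rw [hudef]
        simp only
        rw [hfz n hn', hfz (n+1) (by omega)]
        simp [Real.zero_rpow hp0.ne']
    rw [hnum_eq]
    have h1 : (Icc 1 (2*N)) = Ioc 0 (2*N) := Finset.Icc_add_one_left_eq_Ioc 0 (2*N)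
    have h2 : (Icc 1 N) = Ioc 0 N := Finset.Icc_add_one_left_eq_Ioc 0 N
    have hsplit : ∑ k ∈ Icc 1 (2*N), (k:ℝ)^α * |f k - f (k-1)|^p
        = (∑ k ∈ Icc 1 N, (k:ℝ)^α * |f k - f (k-1)|^p)
          + ∑ k ∈ Ioc N (2*N), (k:ℝ)^α * |f k - f (k-1)|^p := by
      rw [h1, h2, Finset.sum_Ioc_consecutive _ (Nat.zero_le N) (by omega : N ≤ 2*N)]
    rw [hsplit]
    -- part 2 : the linear cutoff region
    have hpart2 : ∑ k ∈ Ioc N (2*N), (k:ℝ)^α * |f k - f (k-1)|^p ≤ 1 := by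
      have hbd : ∀ k ∈ Ioc N (2*N), (k:ℝ)^α * |f k - f (k-1)|^p ≤ (N:ℝ)^(-1:ℝ) := by
        intro k hk
        obtain ⟨hk1, hk2⟩ := mem_Ioc.1 hk
        have hdiff : f k - f (k-1) = -((N:ℝ) ^ (γ-1)) := by
          have hfk : f k = (N:ℝ) ^ (γ-1) * (2*(N:ℝ) - (k:ℝ)) := by
            rw [hfdef]; simp only
            rw [if_neg (by omega), if_pos (by omega)]
          rcases Nat.eq_or_lt_of_le hk1 with h | h
          · have hfk1 : f (k-1) = (N:ℝ) ^ γ := by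
              rw [hfdef]; simp only
              rw [if_pos (by omega)]
              congr 1
              push_cast [← h]
              norm_num
            rw [hfk, hfk1, ← h]
            have : (N:ℝ) ^ γ = (N:ℝ) ^ (γ-1) * N := by
              rw [← Real.rpow_add_one hNR.ne' (γ-1)]
              norm_num
            rw [this]
            push_cast
            ring
          · have hfk1 : f (k-1) = (N:ℝ) ^ (γ-1) * (2*(N:ℝ) - ((k:ℝ)-1)) := by
              rw [hfdef]; simp only
              rw [if_neg (by omega), if_pos (by omega)]
              congr 2
              push_cast [Nat.cast_sub (by omega : 1 ≤ k)]
              ring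
            rw [hfk, hfk1]
            ring
        rw [hdiff, abs_neg, abs_of_nonneg (Real.rpow_nonneg hNR.le _)]
        have hNk : (k:ℝ)^α ≤ (N:ℝ)^α :=
          Real.rpow_le_rpow_of_nonpos hNR (by exact_mod_cast hk1.le) hα.le
        have hpow : ((N:ℝ) ^ (γ-1)) ^ p = (N:ℝ) ^ ((γ-1)*p) :=
          (Real.rpow_mul hNR.le _ _).symm
        calc (k:ℝ)^α * ((N:ℝ) ^ (γ-1)) ^ p
            ≤ (N:ℝ)^α * ((N:ℝ) ^ (γ-1)) ^ p :=
              mul_le_mul_of_nonneg_right hNk (Real.rpow_nonneg (Real.rpow_nonneg hNR.le _) _)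
          _ = (N:ℝ) ^ (α + (γ-1)*p) := by rw [hpow, ← Real.rpow_add hNR]
          _ = (N:ℝ) ^ (-1:ℝ) := by
              congr 1
              have : (γ-1)*p = γ*p - p := by ring
              rw [this, hγp]; ring
      calc ∑ k ∈ Ioc N (2*N), (k:ℝ)^α * |f k - f (k-1)|^p
          ≤ (Ioc N (2*N)).card • ((N:ℝ)^(-1:ℝ)) := Finset.sum_le_card_nsmul _ _ _ hbd
        _ = (N:ℝ) * (N:ℝ)^(-1:ℝ) := by
            rw [Nat.card_Ioc, nsmul_eq_mul]
            congr 1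
            have h2N : 2 * N - N = N := by omega
            rw [h2N]
        _ = 1 := by
            rw [Real.rpow_neg_one]
            exact mul_inv_cancel₀ hNR.ne'
    -- part 1 : the main region
    have hpart1 : ∑ k ∈ Icc 1 N, (k:ℝ)^α * |f k - f (k-1)|^p
        ≤ 1 + γ ^ p * (1 + Real.log N) := by
      have hins : (Icc 1 N) = insert 1 (Icc 2 N) := by
        ext x; simp only [mem_Icc, Finset.mem_insert]; omega
      rw [hins, Finset.sum_insert (by simp)]
      have hterm1 : ((1:ℕ):ℝ)^α * |f 1 - f 0|^p = 1 := by
        rw [hf1, hf0]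
        norm_num
      have hbd2 : ∀ k ∈ Icc 2 N, (k:ℝ)^α * |f k - f (k-1)|^p ≤ γ^p * (((k-1:ℕ):ℝ))⁻¹ := by
        intro k hk
        obtain ⟨hk2, hkN⟩ := mem_Icc.1 hk
        have hcast : ((k-1:ℕ):ℝ) = (k:ℝ) - 1 := by
          push_cast [Nat.cast_sub (by omega : 1 ≤ k)]; ring
        have hkm1 : (0:ℝ) < (k:ℝ) - 1 := by
          have : (2:ℝ) ≤ (k:ℝ) := by exact_mod_cast hk2
          linarith
        have hklt : (k:ℝ) - 1 < (k:ℝ) := by linarith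
        have hfk : f k = (k:ℝ)^γ := by rw [hfdef]; simp only [if_pos hkN]
        have hfk1 : f (k-1) = ((k:ℝ)-1)^γ := by
          rw [hfdef]; simp only
          rw [if_pos (by omega)]
          rw [hcast]
        have hd0 : 0 ≤ f k - f (k-1) := by
          rw [hfk, hfk1]
          have := Real.rpow_le_rpow (by linarith) hklt.le hγpos.le
          linarith
        rw [hfk, hfk1, abs_of_nonneg (by rw [← hfk, ← hfk1]; exact hd0)]
        have hmain : ((k:ℝ)^γ - ((k:ℝ)-1)^γ)^p ≤ γ^p * (((k:ℝ)-1)^((γ-1)*p)) ∨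
            ((k:ℝ)^γ - ((k:ℝ)-1)^γ)^p ≤ γ^p * ((k:ℝ)^((γ-1)*p)) := by
          rcases le_total γ 1 with hγ1 | hγ1
          · left
            have htan := rpow_tangent_left_ub hkm1 hklt hγpos hγ1
            have h1 : (k:ℝ) - ((k:ℝ)-1) = 1 := by ring
            rw [h1, mul_one] at htan
            calc ((k:ℝ)^γ - ((k:ℝ)-1)^γ)^p
                ≤ (γ * ((k:ℝ)-1)^(γ-1))^p := by
                  apply Real.rpow_le_rpow ?_ htan hp0.le
                  rw [← hfk, ← hfk1]; exact hd0
              _ = γ^p * (((k:ℝ)-1)^((γ-1)*p)) := by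
                  rw [Real.mul_rpow hγpos.le (Real.rpow_nonneg hkm1.le _),
                    ← Real.rpow_mul hkm1.le]
          · right
            have htan := rpow_tangent_right_ub (by linarith : (0:ℝ) ≤ (k:ℝ)-1) hklt hγ1
            have h1 : (k:ℝ) - ((k:ℝ)-1) = 1 := by ring
            rw [h1, mul_one] at htan
            calc ((k:ℝ)^γ - ((k:ℝ)-1)^γ)^p
                ≤ (γ * (k:ℝ)^(γ-1))^p := by
                  apply Real.rpow_le_rpow ?_ htan hp0.le
                  rw [← hfk, ← hfk1]; exact hd0
              _ = γ^p * ((k:ℝ)^((γ-1)*p)) := by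
                  rw [Real.mul_rpow hγpos.le (Real.rpow_nonneg (by linarith) _),
                    ← Real.rpow_mul (by linarith)]
        have hexp : α + (γ-1)*p = -1 := by
          have : (γ-1)*p = γ*p - p := by ring
          rw [this, hγp]; ring
        rw [hcast]
        rcases hmain with hm | hm
        · have hka : (k:ℝ)^α ≤ ((k:ℝ)-1)^α :=
            Real.rpow_le_rpow_of_nonpos hkm1 (by linarith) hα.le
          calc (k:ℝ)^α * ((k:ℝ)^γ - ((k:ℝ)-1)^γ)^p
              ≤ (k:ℝ)^α * (γ^p * (((k:ℝ)-1)^((γ-1)*p))) :=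
                mul_le_mul_of_nonneg_left hm (Real.rpow_nonneg (by positivity) _)
            _ ≤ ((k:ℝ)-1)^α * (γ^p * (((k:ℝ)-1)^((γ-1)*p))) :=
                mul_le_mul_of_nonneg_right hka
                  (mul_nonneg (Real.rpow_nonneg hγpos.le _) (Real.rpow_nonneg hkm1.le _))
            _ = γ^p * (((k:ℝ)-1)^α * ((k:ℝ)-1)^((γ-1)*p)) := by ring
            _ = γ^p * ((k:ℝ)-1)⁻¹ := by
                rw [← Real.rpow_add hkm1, hexp, Real.rpow_neg_one]
        · calc (k:ℝ)^α * ((k:ℝ)^γ - ((k:ℝ)-1)^γ)^p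
              ≤ (k:ℝ)^α * (γ^p * ((k:ℝ)^((γ-1)*p))) :=
                mul_le_mul_of_nonneg_left hm (Real.rpow_nonneg (by positivity) _)
            _ = γ^p * ((k:ℝ)^α * (k:ℝ)^((γ-1)*p)) := by ring
            _ = γ^p * (k:ℝ)⁻¹ := by
                rw [← Real.rpow_add (by positivity), hexp, Real.rpow_neg_one]
            _ ≤ γ^p * ((k:ℝ)-1)⁻¹ := by
                apply mul_le_mul_of_nonneg_left ?_ (Real.rpow_nonneg hγpos.le _)
                apply inv_anti₀ hkm1 (by linarith)
      have hsum2 : ∑ k ∈ Icc 2 N, γ^p * (((k-1:ℕ):ℝ))⁻¹ = γ^p * ∑ j ∈ Icc 1 (N-1), (1:ℝ)/j := by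
        rw [Finset.mul_sum]
        rw [← Finset.Ico_add_one_right_eq_Icc, ← Finset.Ico_add_one_right_eq_Icc,
          Finset.sum_Ico_eq_sum_range, Finset.sum_Ico_eq_sum_range]
        have hcard : N + 1 - 2 = N - 1 + 1 - 1 := by omega
        rw [hcard]
        apply Finset.sum_congr rfl
        intro i _
        have : 2 + i - 1 = 1 + i := by omega
        rw [this]
        rw [one_div]
      have hharm : ∑ j ∈ Icc 1 (N-1), (1:ℝ)/j ≤ 1 + Real.log N := by
        rcases Nat.lt_or_ge N 2 with h | h
        · interval_cases N
          norm_num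
        · calc ∑ j ∈ Icc 1 (N-1), (1:ℝ)/j ≤ 1 + Real.log (N-1:ℕ) :=
              harmonic_upper (N-1) (by omega)
            _ ≤ 1 + Real.log N := by
              have : ((N-1:ℕ):ℝ) ≤ (N:ℝ) := by
                push_cast [Nat.cast_sub (by omega : 1 ≤ N)]; linarith
              have hlog := Real.log_le_log (by
                have : (1:ℝ) ≤ ((N-1:ℕ):ℝ) := by
                  have : (1:ℕ) ≤ N - 1 := by omega
                  exact_mod_cast this
                linarith) this
              linarith
      calc ((1:ℕ):ℝ)^α * |f 1 - f 0|^p + ∑ k ∈ Icc 2 N, (k:ℝ)^α * |f k - f (k-1)|^p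
          ≤ 1 + ∑ k ∈ Icc 2 N, γ^p * (((k-1:ℕ):ℝ))⁻¹ := by
            rw [hterm1]
            exact add_le_add (le_refl 1) (Finset.sum_le_sum hbd2)
        _ = 1 + γ^p * ∑ j ∈ Icc 1 (N-1), (1:ℝ)/j := by rw [hsum2]
        _ ≤ 1 + γ^p * (1 + Real.log N) := by
            have := mul_le_mul_of_nonneg_left hharm (Real.rpow_nonneg hγpos.le p)
            linarith
    linarith
  · -- denominator bound
    have hden_eq : ∑' n : ℕ, ((n + 2 : ℕ) : ℝ) ^ (α-p) * ‖u (n + 1)‖ ^ p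
        = ∑ m ∈ Icc 1 (2*N), ((m:ℝ)+1) ^ (α-p) * |f m| ^ p := by
      rw [tsum_eq_sum (s := Finset.range (2*N)) ?_]
      · rw [← Finset.Ico_add_one_right_eq_Icc, Finset.sum_Ico_eq_sum_range]
        try simp only [Nat.add_sub_cancel]
        apply Finset.sum_congr rfl
        intro n _
        rw [hudef]
        simp only [add_comm 1 n]
        rw [Complex.norm_real, Real.norm_eq_abs]
        congr 2
        push_cast
        ring
      · intro n hn
        have hn' : 2*N ≤ n := by simpa using hn
        rw [hudef]; simp only
        rw [hfz (n+1) (by omega)]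
        simp [Real.zero_rpow hp0.ne']
    rw [hden_eq]
    set c : ℝ := max (p - α - 1) 1 with hcdef
    have hc1 : (1:ℝ) ≤ c := le_max_right _ _
    have hsub : ∑ m ∈ Icc 1 N, ((m:ℝ)+1) ^ (α-p) * |f m| ^ p
        ≤ ∑ m ∈ Icc 1 (2*N), ((m:ℝ)+1) ^ (α-p) * |f m| ^ p := by
      apply Finset.sum_le_sum_of_subset_of_nonneg
      · apply Finset.Icc_subset_Icc_right; omega
      · intro m _ _
        apply mul_nonneg (Real.rpow_nonneg (by positivity) _) (Real.rpow_nonneg (abs_nonneg _) _)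
    have hterm : ∀ m ∈ Icc 1 N, ((m:ℝ)+1)⁻¹ - c * ((1:ℝ) / ((m:ℝ)+1)^(2:ℕ))
        ≤ ((m:ℝ)+1) ^ (α-p) * |f m| ^ p := by
      intro m hm
      obtain ⟨hm1, hmN⟩ := mem_Icc.1 hm
      have hx1 : (1:ℝ) ≤ (m:ℝ) := by exact_mod_cast hm1
      have hx0 : (0:ℝ) < (m:ℝ) := by linarith
      have hx10 : (0:ℝ) < (m:ℝ) + 1 := by linarith
      have hfm : f m = (m:ℝ)^γ := by rw [hfdef]; simp only [if_pos hmN]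
      rw [hfm, abs_of_nonneg (Real.rpow_nonneg hx0.le _), ← Real.rpow_mul hx0.le]
      set r : ℝ := γ * p with hrdef
      have hr : r = p - α - 1 := hγp
      have hrpos : 0 < r := by rw [hr]; linarith
      have hcr : r ≤ c := hr ▸ le_max_left _ _
      have hsplitpow : ((m:ℝ)+1) ^ (α-p) = ((m:ℝ)+1)^(-r) * ((m:ℝ)+1)⁻¹ := by
        rw [← Real.rpow_neg_one ((m:ℝ)+1), ← Real.rpow_add hx10]
        congr 1
        rw [hr]; ring
      have hfrac : ((m:ℝ)+1) ^ (α-p) * (m:ℝ)^r = ((m:ℝ)/((m:ℝ)+1))^r * ((m:ℝ)+1)⁻¹ := by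
        rw [hsplitpow, Real.div_rpow hx0.le hx10.le, Real.rpow_neg hx10.le, div_eq_mul_inv]
        ring
      rw [hfrac]
      have hkey : 1 - c/((m:ℝ)+1) ≤ ((m:ℝ)/((m:ℝ)+1))^r := by
        have hq1 : (m:ℝ)/((m:ℝ)+1) ≤ 1 := by
          rw [div_le_one hx10]; linarith
        have hq0 : (0:ℝ) < (m:ℝ)/((m:ℝ)+1) := by positivity
        rcases le_total r 1 with hr1 | hr1
        · have := Real.rpow_le_rpow_of_exponent_ge hq0 hq1 hr1
          rw [Real.rpow_one] at this
          have heq : (m:ℝ)/((m:ℝ)+1) = 1 - 1/((m:ℝ)+1) := by field_simp; ring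
          have hcm : 1/((m:ℝ)+1) ≤ c/((m:ℝ)+1) :=
            div_le_div_of_nonneg_right hc1 hx10.le
          linarith [this, hcm, heq]
        · have hs1 : (-1:ℝ) ≤ -(1/((m:ℝ)+1)) := by
            have : 1/((m:ℝ)+1) ≤ 1 := by
              rw [div_le_one hx10]; linarith
            linarith
          have hB := one_add_mul_self_le_rpow_one_add hs1 hr1
          have heq : (1:ℝ) + -(1/((m:ℝ)+1)) = (m:ℝ)/((m:ℝ)+1) := by field_simp; ring
          rw [heq] at hB
          have hcm : r/((m:ℝ)+1) ≤ c/((m:ℝ)+1) :=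
            div_le_div_of_nonneg_right hcr hx10.le
          have hring : r * (-(1/((m:ℝ)+1))) = -(r/((m:ℝ)+1)) := by ring
          linarith
      calc ((m:ℝ)+1)⁻¹ - c * ((1:ℝ) / ((m:ℝ)+1)^(2:ℕ))
          = (1 - c/((m:ℝ)+1)) * ((m:ℝ)+1)⁻¹ := by
            field_simp
        _ ≤ ((m:ℝ)/((m:ℝ)+1))^r * ((m:ℝ)+1)⁻¹ :=
            mul_le_mul_of_nonneg_right hkey (by positivity)
    have hlow : ∑ m ∈ Icc 1 N, (((m:ℝ)+1)⁻¹ - c * ((1:ℝ) / ((m:ℝ)+1)^(2:ℕ)))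
        ≤ ∑ m ∈ Icc 1 N, ((m:ℝ)+1) ^ (α-p) * |f m| ^ p := Finset.sum_le_sum hterm
    have hsum_split : ∑ m ∈ Icc 1 N, (((m:ℝ)+1)⁻¹ - c * ((1:ℝ) / ((m:ℝ)+1)^(2:ℕ)))
        = (∑ m ∈ Icc 1 N, (1:ℝ)/((m:ℝ)+1)) - c * ∑ m ∈ Icc 1 N, (1:ℝ)/((m:ℝ)+1)^(2:ℕ) := by
      rw [Finset.sum_sub_distrib, Finset.mul_sum]
      congr 1
      apply Finset.sum_congr rfl
      intro m _
      rw [one_div]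
    have hlog2 : Real.log 2 ≤ 1 := by
      have := Real.log_le_sub_one_of_pos (show (0:ℝ) < 2 by norm_num)
      linarith
    have hlogN : Real.log (N:ℝ) ≤ Real.log ((N:ℝ)+2) :=
      Real.log_le_log hNR (by linarith)
    have hharm := harmonic_lower N
    have hsq := sq_inv_sum_le N
    have hc0 : (0:ℝ) ≤ c := by linarith
    calc Real.log (N:ℝ) - (1 + c)
        ≤ (Real.log ((N:ℝ)+2) - Real.log 2) - c * 1 := by nlinarith
      _ ≤ (∑ m ∈ Icc 1 N, (1:ℝ)/((m:ℝ)+1)) - c * ∑ m ∈ Icc 1 N, (1:ℝ)/((m:ℝ)+1)^(2:ℕ) := by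
          have := mul_le_mul_of_nonneg_left hsq hc0
          linarith
      _ = ∑ m ∈ Icc 1 N, (((m:ℝ)+1)⁻¹ - c * ((1:ℝ) / ((m:ℝ)+1)^(2:ℕ))) := hsum_split.symm
      _ ≤ ∑ m ∈ Icc 1 N, ((m:ℝ)+1) ^ (α-p) * |f m| ^ p := hlow
      _ ≤ ∑ m ∈ Icc 1 (2*N), ((m:ℝ)+1) ^ (α-p) * |f m| ^ p := hsub

/-- Optimality of the constant in the weighted discrete p-Hardy inequality. -/
theorem weighted_p_Hardy_optimal (p α : ℝ) (hp : 1 < p) (hα : α < 0) :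
    sInf {r : ℝ | ∃ u : ℕ → ℂ, (Function.support u).Finite ∧ u 0 = 0 ∧ u ≠ 0 ∧
        r = (∑' n : ℕ, ((n + 1 : ℕ) : ℝ) ^ α * ‖u (n + 1) - u n‖ ^ p) /
            (∑' n : ℕ, ((n + 2 : ℕ) : ℝ) ^ (α - p) * ‖u (n + 1)‖ ^ p)} =
      ((p - α - 1) / p) ^ p := by
  have hp0 : 0 < p := by linarith
  set S := {r : ℝ | ∃ u : ℕ → ℂ, (Function.support u).Finite ∧ u 0 = 0 ∧ u ≠ 0 ∧
      r = (∑' n : ℕ, ((n + 1 : ℕ) : ℝ) ^ α * ‖u (n + 1) - u n‖ ^ p) /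
          (∑' n : ℕ, ((n + 2 : ℕ) : ℝ) ^ (α - p) * ‖u (n + 1)‖ ^ p)} with hS
  set C : ℝ := ((p - α - 1) / p) ^ p with hC
  have hCpos : 0 < (p - α - 1)/p := div_pos (by linarith) hp0
  -- positivity of denominators
  have hden_pos : ∀ u : ℕ → ℂ, (Function.support u).Finite → u 0 = 0 → u ≠ 0 →
      0 < ∑' n : ℕ, ((n + 2 : ℕ) : ℝ) ^ (α - p) * ‖u (n + 1)‖ ^ p := by
    intro u hfin h0 hne
    classical
    set N : ℕ := (hfin.toFinset.sup id) + 1 with hN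
    have hzero : ∀ n, N ≤ n → u n = 0 := by
      intro n hn
      by_contra h
      have : n ∈ hfin.toFinset := by simpa [Function.mem_support] using h
      have := Finset.le_sup (f := id) this
      simp only [id] at this
      omega
    have hsummable : Summable (fun n : ℕ => ((n + 2 : ℕ) : ℝ) ^ (α - p) * ‖u (n + 1)‖ ^ p) := by
      apply summable_of_ne_finset_zero (s := Finset.range N)
      intro n hn
      have hn' : N ≤ n := by simpa using hn
      rw [hzero (n+1) (by omega)]
      simp [Real.zero_rpow hp0.ne']
    obtain ⟨m, hm⟩ : ∃ m, u m ≠ 0 := by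
      by_contra h
      push_neg at h
      exact hne (funext h)
    have hm1 : 1 ≤ m := by
      rcases Nat.eq_zero_or_pos m with h | h
      · exact absurd (h ▸ h0) hm
      · exact h
    have hterm : 0 < ((m - 1 + 2 : ℕ) : ℝ) ^ (α - p) * ‖u (m - 1 + 1)‖ ^ p := by
      have hmm : m - 1 + 1 = m := by omega
      rw [hmm]
      apply mul_pos
      · apply Real.rpow_pos_of_pos
        positivity
      · apply Real.rpow_pos_of_pos
        exact norm_pos_iff.mpr hm
    calc (0:ℝ) < ((m - 1 + 2 : ℕ) : ℝ) ^ (α - p) * ‖u (m - 1 + 1)‖ ^ p := hterm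
      _ ≤ ∑' n : ℕ, ((n + 2 : ℕ) : ℝ) ^ (α - p) * ‖u (n + 1)‖ ^ p := by
          apply Summable.le_tsum hsummable
          intro i _
          apply mul_nonneg (Real.rpow_nonneg (Nat.cast_nonneg _) _)
            (Real.rpow_nonneg (norm_nonneg _) _)
  -- every element of S is at least C
  have hlb : ∀ r ∈ S, C ≤ r := by
    rintro r ⟨u, hfin, h0, hne, rfl⟩
    have hdpos := hden_pos u hfin h0 hne
    rw [le_div_iff₀ hdpos]
    exact lower_bound hp hα u hfin h0
  have hbdd : BddBelow S := ⟨C, hlb⟩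
  -- S is nonempty
  have hne : S.Nonempty := by
    obtain ⟨u, hsupp, hu0, hune, -, -⟩ := upper_bound hp hα 1 le_rfl
    exact ⟨_, ⟨u, hsupp, hu0, hune, rfl⟩⟩
  apply le_antisymm
  · rw [Real.sInf_le_iff hbdd hne]
    intro ε hε
    -- choose N large
    set B : ℝ := 1 + max (p - α - 1) 1 with hB
    have hB2 : (2:ℝ) ≤ B := by
      have := le_max_right (p - α - 1) (1:ℝ)
      rw [hB]; linarith
    set L₀ : ℝ := (2 + C + C * B + (ε/2) * B)/(ε/2) with hL₀
    set T : ℝ := max L₀ (B + 1) with hT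
    set N : ℕ := ⌈Real.exp T⌉₊ with hN
    have hN1 : 1 ≤ N := by
      rw [hN]
      exact Nat.one_le_iff_ne_zero.2 (by
        have := Real.exp_pos T
        positivity)
    have hLT : T ≤ Real.log N := by
      have h1 : Real.exp T ≤ (N:ℝ) := Nat.le_ceil _
      calc T = Real.log (Real.exp T) := (Real.log_exp T).symm
        _ ≤ Real.log N := Real.log_le_log (Real.exp_pos T) h1
    set L : ℝ := Real.log N with hL
    have hLB : B + 1 ≤ L := le_trans (le_max_right _ _) hLT
    have hL0 : L₀ ≤ L := le_trans (le_max_left _ _) hLT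
    obtain ⟨u, hsupp, hu0, hune, hnum, hden⟩ := upper_bound hp hα N hN1
    have hdpos := hden_pos u hsupp hu0 hune
    refine ⟨_, ⟨u, hsupp, hu0, hune, rfl⟩, ?_⟩
    have hnum0 : (0:ℝ) ≤ 2 + C * (1 + L) := by
      have : (0:ℝ) ≤ C := Real.rpow_nonneg hCpos.le p
      nlinarith
    have hLBpos : 0 < L - B := by linarith
    have hdenlb : L - B ≤ ∑' n : ℕ, ((n + 2 : ℕ) : ℝ) ^ (α - p) * ‖u (n + 1)‖ ^ p := by
      rw [hL, hB]
      exact hden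
    have hdiv : (∑' n : ℕ, ((n + 1 : ℕ) : ℝ) ^ α * ‖u (n + 1) - u n‖ ^ p) /
        (∑' n : ℕ, ((n + 2 : ℕ) : ℝ) ^ (α - p) * ‖u (n + 1)‖ ^ p)
        ≤ (2 + C * (1 + L)) / (L - B) := by
      apply div_le_div₀ hnum0 ?_ hLBpos hdenlb
      exact hnum
    have hfinal : (2 + C * (1 + L)) / (L - B) ≤ C + ε/2 := by
      rw [div_le_iff₀ hLBpos]
      have hL₀eq : L₀ * (ε/2) = 2 + C + C * B + (ε/2) * B := by
        rw [hL₀]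
        field_simp
      have hεL : L₀ * (ε/2) ≤ L * (ε/2) :=
        mul_le_mul_of_nonneg_right hL0 (by linarith)
      nlinarith
    calc (∑' n : ℕ, ((n + 1 : ℕ) : ℝ) ^ α * ‖u (n + 1) - u n‖ ^ p) /
        (∑' n : ℕ, ((n + 2 : ℕ) : ℝ) ^ (α - p) * ‖u (n + 1)‖ ^ p)
        ≤ C + ε/2 := le_trans hdiv hfinal
      _ < C + ε := by linarith
  · exact le_csInf hne hlb
end

section
/- Let p > 1 be a real number. For every t ∈ [0,1] and every z ∈ ℂ, one has |z − t|^p ≥ (1 − t)^{p−1} (|z|^p − t). -/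
/-- Auxiliary pointwise inequality: `|z - t|^p ≥ (1 - t)^{p-1}(|z|^p - t)`. -/
theorem aux_pointwise_ineq (p : ℝ) (hp : 1 < p) (t : ℝ) (ht : t ∈ Set.Icc (0 : ℝ) 1) (z : ℂ) :
    ‖z - (t : ℂ)‖ ^ p ≥ (1 - t) ^ (p - 1) * (‖z‖ ^ p - t) := by
  obtain ⟨ht0, ht1⟩ := ht
  have habs : (0:ℝ) ≤ ‖z - (t:ℂ)‖ ^ p := Real.rpow_nonneg (norm_nonneg _) p
  set x := ‖z‖ with hxdef
  have hxnn : 0 ≤ x := norm_nonneg z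
  rcases eq_or_lt_of_le ht1 with h1 | h1
  · rw [← h1]
    rw [sub_self, Real.zero_rpow (by linarith)]
    simpa using habs
  · have ha : 0 < 1 - t := by linarith
    have hap : 0 < (1 - t) ^ (p - 1) := Real.rpow_pos_of_pos ha _
    rcases le_or_gt x t with hxt | hxt
    · -- trivial case : RHS ≤ 0
      have hx1 : x ≤ 1 := le_trans hxt ht1
      have hxp : x ^ p ≤ t := by
        rcases eq_or_lt_of_le hxnn with h0 | h0
        · rw [← h0, Real.zero_rpow (by linarith)]; exact ht0
        · calc x ^ p ≤ x ^ (1:ℝ) :=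
                Real.rpow_le_rpow_of_exponent_ge h0 hx1 hp.le
            _ = x := Real.rpow_one x
            _ ≤ t := hxt
      have : (1 - t) ^ (p - 1) * (x ^ p - t) ≤ 0 :=
        mul_nonpos_of_nonneg_of_nonpos hap.le (by linarith)
      linarith
    · -- main case
      have hs : x - t ≤ ‖z - (t:ℂ)‖ := by
        have h := norm_sub_norm_le z (t:ℂ)
        rwa [Complex.norm_real, Real.norm_eq_abs, abs_of_nonneg ht0] at h
      have hxtpos : 0 < x - t := sub_pos.mpr hxt
      have hspow : (x - t) ^ p ≤ ‖z - (t:ℂ)‖ ^ p :=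
        Real.rpow_le_rpow hxtpos.le hs (by linarith)
      set y := (x - t) / (1 - t) with hydef
      have hynn : 0 ≤ y := div_nonneg hxtpos.le ha.le
      have hconv := (convexOn_rpow hp.le).2 (Set.mem_Ici.mpr zero_le_one)
        (Set.mem_Ici.mpr hynn) ht0 (by linarith : (0:ℝ) ≤ 1 - t) (by ring)
      simp only [smul_eq_mul, mul_one, Real.one_rpow] at hconv
      have hty : t + (1 - t) * y = x := by
        rw [hydef, mul_div_cancel₀ _ ha.ne']; ring
      rw [hty] at hconv
      -- hconv : x ^ p ≤ t + (1 - t) * y ^ p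
      have hyp : (1 - t) * y ^ p = (x - t) ^ p / (1 - t) ^ (p - 1) := by
        rw [hydef, Real.div_rpow hxtpos.le ha.le]
        rw [show p = (p - 1) + 1 by ring, Real.rpow_add ha, Real.rpow_one]
        field_simp
        ring
      rw [hyp] at hconv
      have : (1 - t) ^ (p - 1) * (x ^ p - t) ≤ (x - t) ^ p := by
        rw [mul_comm, ← le_div_iff₀ hap]
        linarith
      linarith
end

section
/- Let p > 1, let V : ℕ → ℝ satisfy V_n ≥ 0 for all n ≥ 1, and let g : ℕ → ℝ satisfy g_0 = 0, g_n > 0 for all n ≥ 1, and g_{n+1} ≥ g_n for all n ≥ 1. Then for every finitely supported sequence u : ℕ → ℂ with u_0 = 0, one has ∑_{n=1}^∞ V_n |u_n − u_{n−1}|^p ≥ − ∑_{n=1}^∞ [V_{n+1}(g_{n+1} − g_n)^{p−1} − V_n(g_n − g_{n−1})^{p−1}] · |u_n|^p / g_n^{p−1}. -/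
/-- Abel summation identity used below. -/
lemma abel_aux (W F : ℕ → ℝ) (N : ℕ) :
    ∑ n ∈ Finset.range N, (W n - W (n+1)) * F (n+1)
      = ∑ n ∈ Finset.range N, W n * (F (n+1) - F n) + W 0 * F 0 - W N * F N := by
  induction N with
  | zero => simp
  | succ k ih => rw [Finset.sum_range_succ, Finset.sum_range_succ, ih]; ring

/-- Key scalar inequality (subadditivity of `(a, s) ↦ a^p / s^(p-1)`). -/
lemma key_ineq (p : ℝ) (hp : 1 < p) (t s a b c : ℝ) (ht : 0 < t) (hts : t ≤ s)
    (ha : 0 ≤ a) (hb : 0 ≤ b) (hc : 0 ≤ c) (habc : a ≤ b + c) :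
    (s - t) ^ (p - 1) * (a ^ p / s ^ (p - 1) - b ^ p / t ^ (p - 1)) ≤ c ^ p := by
  have hp1 : (0:ℝ) < p - 1 := by linarith
  have hp0 : (0:ℝ) < p := by linarith
  rcases eq_or_lt_of_le hts with rfl | hlt
  · rw [sub_self, Real.zero_rpow hp1.ne', zero_mul]
    exact Real.rpow_nonneg hc p
  set r := s - t with hrdef
  have hrpos : 0 < r := by simp only [hrdef]; linarith
  have hs : 0 < s := lt_of_lt_of_le ht hts
  have htr : t + r = s := by simp [hrdef]
  -- convexity step: (b + c)^p ≤ (t/s) * (b*s/t)^p + (r/s) * (c*s/r)^p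
  have hconv := (convexOn_rpow hp.le).2
    (Set.mem_Ici.2 (by positivity : (0:ℝ) ≤ b * s / t))
    (Set.mem_Ici.2 (by positivity : (0:ℝ) ≤ c * s / r))
    (by positivity : (0:ℝ) ≤ t / s) (by positivity : (0:ℝ) ≤ r / s)
    (by field_simp; linarith)
  have hcomb : (t / s) • (b * s / t) + (r / s) • (c * s / r) = b + c := by
    field_simp
    have h1 : t * t⁻¹ = 1 := mul_inv_cancel₀ ht.ne'
    have h2 : s * s⁻¹ = 1 := mul_inv_cancel₀ hs.ne'
    have h3 : r * r⁻¹ = 1 := mul_inv_cancel₀ hrpos.ne'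
    linear_combination (b * (s * s⁻¹)) * h1 + b * h2 + (c * (r * r⁻¹)) * h2 + c * h3
  rw [hcomb] at hconv
  have hb' : (t / s) • ((b * s / t) ^ p) = s ^ (p-1) * (b ^ p / t ^ (p-1)) := by
    have h1 : (b * s / t) ^ p = b ^ p * s ^ p / t ^ p := by
      rw [Real.div_rpow (by positivity) ht.le, Real.mul_rpow hb hs.le]
    have hsp : s ^ p = s ^ (p-1) * s := by
      rw [← Real.rpow_add_one hs.ne']; congr 1; ring
    have htp : t ^ p = t ^ (p-1) * t := by
      rw [← Real.rpow_add_one ht.ne']; congr 1; ring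
    have htp0 : t ^ (p-1) ≠ 0 := (Real.rpow_pos_of_pos ht _).ne'
    rw [smul_eq_mul, h1, hsp, htp]
    field_simp
  have hc' : (r / s) • ((c * s / r) ^ p) = s ^ (p-1) * (c ^ p / r ^ (p-1)) := by
    have h1 : (c * s / r) ^ p = c ^ p * s ^ p / r ^ p := by
      rw [Real.div_rpow (by positivity) hrpos.le, Real.mul_rpow hc hs.le]
    have hsp : s ^ p = s ^ (p-1) * s := by
      rw [← Real.rpow_add_one hs.ne']; congr 1; ring
    have hrp : r ^ p = r ^ (p-1) * r := by
      rw [← Real.rpow_add_one hrpos.ne']; congr 1; ring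
    have hrp0 : r ^ (p-1) ≠ 0 := (Real.rpow_pos_of_pos hrpos _).ne'
    rw [smul_eq_mul, h1, hsp, hrp]
    field_simp
  rw [hb', hc'] at hconv
  have hap : a ^ p ≤ (b + c) ^ p := Real.rpow_le_rpow ha habc hp0.le
  have hsp1 : 0 < s ^ (p-1) := Real.rpow_pos_of_pos hs _
  have hmain : a ^ p / s ^ (p-1) - b ^ p / t ^ (p-1) ≤ c ^ p / r ^ (p-1) := by
    have h2 : a ^ p / s ^ (p-1) ≤ b ^ p / t ^ (p-1) + c ^ p / r ^ (p-1) := by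
      rw [div_le_iff₀ hsp1]
      calc a ^ p ≤ (b + c) ^ p := hap
        _ ≤ s ^ (p-1) * (b ^ p / t ^ (p-1)) + s ^ (p-1) * (c ^ p / r ^ (p-1)) := hconv
        _ = (b ^ p / t ^ (p-1) + c ^ p / r ^ (p-1)) * s ^ (p-1) := by ring
    linarith
  have hrp1 : (0:ℝ) < r ^ (p-1) := Real.rpow_pos_of_pos hrpos _
  calc r ^ (p-1) * (a ^ p / s ^ (p-1) - b ^ p / t ^ (p-1))
      ≤ r ^ (p-1) * (c ^ p / r ^ (p-1)) := by
        exact mul_le_mul_of_nonneg_left hmain hrp1.le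
    _ = c ^ p := by field_simp

/-- Abstract weighted discrete p-Hardy inequality. -/
theorem abstract_weighted_p_Hardy (p : ℝ) (hp : 1 < p) (V g : ℕ → ℝ)
    (hV : ∀ n, 1 ≤ n → 0 ≤ V n) (hg0 : g 0 = 0) (hgpos : ∀ n, 1 ≤ n → 0 < g n)
    (hgmono : ∀ n, 1 ≤ n → g n ≤ g (n + 1))
    (u : ℕ → ℂ) (hfin : (Function.support u).Finite) (h0 : u 0 = 0) :
    ∑' n : ℕ, V (n + 1) * ‖u (n + 1) - u n‖ ^ p ≥
      - ∑' n : ℕ,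
          (V (n + 2) * (g (n + 2) - g (n + 1)) ^ (p - 1) -
            V (n + 1) * (g (n + 1) - g n) ^ (p - 1)) *
          ‖u (n + 1)‖ ^ p / g (n + 1) ^ (p - 1) := by
  have hp0 : (0:ℝ) < p := by linarith
  obtain ⟨N, hN⟩ : ∃ N, ∀ n, N ≤ n → u n = 0 := by
    refine ⟨hfin.toFinset.sup id + 1, fun n hn => ?_⟩
    by_contra h
    have hmem : n ∈ hfin.toFinset := by simpa [Function.mem_support] using h
    have := Finset.le_sup (f := id) hmem
    simp only [id] at this
    omega
  set F : ℕ → ℝ := fun m => ‖u m‖ ^ p / g m ^ (p-1) with hF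
  set W : ℕ → ℝ := fun m => V (m+1) * (g (m+1) - g m) ^ (p-1) with hW
  have hF0 : F 0 = 0 := by
    simp [hF, h0, Real.zero_rpow hp0.ne']
  have hFN : F N = 0 := by
    simp [hF, hN N le_rfl, Real.zero_rpow hp0.ne']
  have hL : ∑' n : ℕ, V (n + 1) * ‖u (n + 1) - u n‖ ^ p
      = ∑ n ∈ Finset.range N, V (n + 1) * ‖u (n + 1) - u n‖ ^ p := by
    refine tsum_eq_sum fun n hn => ?_
    simp only [Finset.mem_range, not_lt] at hn
    rw [hN (n+1) (by omega), hN n hn]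
    simp [Real.zero_rpow hp0.ne']
  have hR : ∑' n : ℕ,
        (V (n + 2) * (g (n + 2) - g (n + 1)) ^ (p - 1) -
          V (n + 1) * (g (n + 1) - g n) ^ (p - 1)) *
        ‖u (n + 1)‖ ^ p / g (n + 1) ^ (p - 1)
      = ∑ n ∈ Finset.range N, (W (n+1) - W n) * F (n+1) := by
    refine (tsum_eq_sum fun n hn => ?_).trans (Finset.sum_congr rfl fun n _ => ?_)
    · simp only [Finset.mem_range, not_lt] at hn
      rw [hN (n+1) (by omega)]
      simp [Real.zero_rpow hp0.ne']
    · simp only [hW, hF, Nat.add_sub_cancel]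
      rw [mul_div_assoc]
  rw [ge_iff_le, hL, hR]
  have hneg : -∑ n ∈ Finset.range N, (W (n+1) - W n) * F (n+1)
      = ∑ n ∈ Finset.range N, W n * (F (n+1) - F n) := by
    have h1 : ∑ n ∈ Finset.range N, (W n - W (n+1)) * F (n+1)
        = -∑ n ∈ Finset.range N, (W (n+1) - W n) * F (n+1) := by
      rw [← Finset.sum_neg_distrib]
      exact Finset.sum_congr rfl fun n _ => by ring
    rw [← h1, abel_aux, hF0, hFN]
    ring
  rw [hneg]
  refine Finset.sum_le_sum fun n _ => ?_
  have hkey : (g (n+1) - g n) ^ (p-1) * (F (n+1) - F n)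
      ≤ ‖u (n+1) - u n‖ ^ p := by
    cases n with
    | zero =>
      rw [hF0, sub_zero, hg0, sub_zero, h0, sub_zero]
      have hg1 : (0:ℝ) < g 1 ^ (p-1) := Real.rpow_pos_of_pos (hgpos 1 le_rfl) _
      simp only [hF]
      rw [mul_comm, div_mul_cancel₀ _ hg1.ne']
    | succ m =>
      have htri : ‖u (m+2)‖ ≤ ‖u (m+1)‖ + ‖u (m+2) - u (m+1)‖ := by
        have := norm_add_le (u (m+1)) (u (m+2) - u (m+1))
        simpa using this
      simpa [hF] using key_ineq p hp (g (m+1)) (g (m+2)) (‖u (m+2)‖)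
        (‖u (m+1)‖) (‖u (m+2) - u (m+1)‖)
        (hgpos (m+1) (by omega)) (hgmono (m+1) (by omega))
        (norm_nonneg _) (norm_nonneg _) (norm_nonneg _) htri
  have hVn : 0 ≤ V (n+1) := hV (n+1) (by omega)
  calc W n * (F (n+1) - F n)
      = V (n+1) * ((g (n+1) - g n) ^ (p-1) * (F (n+1) - F n)) := by
        simp only [hW]; ring
    _ ≤ V (n+1) * ‖u (n+1) - u n‖ ^ p :=
        mul_le_mul_of_nonneg_left hkey hVn
end

section
/- Let p > 1, let g : ℕ → ℝ satisfy g_0 = 0, g_n > 0 for all n ≥ 1, and g_{n+1} ≥ g_n for all n ≥ 1, and let u : ℕ → ℂ satisfy u_0 = 0. Then for every n ≥ 1, |u_n − u_{n−1}|^p ≥ (|u_n|^p / g_n^{p−1} − |u_{n−1}|^p / g_{n−1}^{p−1}) · (g_n − g_{n−1})^{p−1}, where for n = 1 the term |u_0|^p / g_0^{p−1} is interpreted as 0. -/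
open Real

lemma radon2 {p x y s t : ℝ} (hp : 1 ≤ p) (hx : 0 ≤ x) (hy : 0 ≤ y)
    (hs : 0 < s) (ht : 0 < t) :
    (x + y) ^ p ≤ (x ^ p / s ^ (p - 1) + y ^ p / t ^ (p - 1)) * (s + t) ^ (p - 1) := by
  have hst : 0 < s + t := by linarith
  have h := (convexOn_rpow hp).2 (Set.mem_Ici.2 (by positivity : (0:ℝ) ≤ x * (s+t) / s))
    (Set.mem_Ici.2 (by positivity : (0:ℝ) ≤ y * (s+t) / t))
    (by positivity : (0:ℝ) ≤ s / (s+t)) (by positivity : (0:ℝ) ≤ t / (s+t))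
    (by field_simp)
  simp only [smul_eq_mul] at h
  have e1 : s / (s+t) * (x * (s+t) / s) + t / (s+t) * (y * (s+t) / t) = x + y := by
    field_simp
  rw [e1] at h
  refine h.trans_eq ?_
  rw [div_rpow (by positivity) hs.le, div_rpow (by positivity) ht.le,
    mul_rpow hx hst.le, mul_rpow hy hst.le]
  rw [show (s+t)^p = (s+t)^(p-1) * (s+t) by rw [← Real.rpow_add_one hst.ne']; ring_nf,
    show s^p = s^(p-1) * s by rw [← Real.rpow_add_one hs.ne']; ring_nf,
    show t^p = t^(p-1) * t by rw [← Real.rpow_add_one ht.ne']; ring_nf]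
  have h1 : (0:ℝ) < s ^ (p-1) := rpow_pos_of_pos hs _
  have h2 : (0:ℝ) < t ^ (p-1) := rpow_pos_of_pos ht _
  have h3 : (0:ℝ) < (s+t) ^ (p-1) := rpow_pos_of_pos hst _
  field_simp


/-- Pointwise key inequality in the proof of the abstract weighted p-Hardy inequality.
For `n = 1` the term `|u 0|^p / g 0 ^ (p-1)` equals `0` since `u 0 = 0` and `p > 0`
(so `|u 0|^p = 0` and the quotient vanishes), matching the stated interpretation. -/
theorem pointwise_key_ineq (p : ℝ) (hp : 1 < p) (g : ℕ → ℝ) (hg0 : g 0 = 0)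
    (hgpos : ∀ n, 1 ≤ n → 0 < g n) (hgmono : ∀ n, 1 ≤ n → g n ≤ g (n + 1))
    (u : ℕ → ℂ) (h0 : u 0 = 0) (n : ℕ) (hn : 1 ≤ n) :
    ‖u n - u (n - 1)‖ ^ p ≥
      (‖u n‖ ^ p / g n ^ (p - 1) -
        ‖u (n - 1)‖ ^ p / g (n - 1) ^ (p - 1)) *
        (g n - g (n - 1)) ^ (p - 1) := by
  have hp1 : (0:ℝ) < p - 1 := by linarith
  rcases eq_or_lt_of_le hn with h1 | h2
  · -- n = 1
    subst h1
    simp only [Nat.sub_self, h0, map_zero, norm_zero, hg0, sub_zero]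
    rw [Real.zero_rpow (by linarith : p ≠ 0), Real.zero_rpow hp1.ne', zero_div, sub_zero,
      div_mul_cancel₀ _ (ne_of_gt (rpow_pos_of_pos (hgpos 1 le_rfl) _))]
  · -- 2 ≤ n
    have hm : 1 ≤ n - 1 := by omega
    have hnm : n = (n - 1) + 1 := by omega
    have hB : 0 < g (n - 1) := hgpos _ hm
    have hA : 0 < g n := hgpos _ hn
    have hBA : g (n - 1) ≤ g n := by
      conv_rhs => rw [hnm]
      exact hgmono _ hm
    set a := ‖u n‖ with ha
    set b := ‖u (n - 1)‖ with hb
    set A := g n with hA'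
    set B := g (n - 1) with hB'
    have ha0 : 0 ≤ a := norm_nonneg _
    have hb0 : 0 ≤ b := norm_nonneg _
    have habs : 0 ≤ ‖u n - u (n-1)‖ := norm_nonneg _
    rcases eq_or_lt_of_le hBA with hE | hlt
    · rw [← hE, sub_self, Real.zero_rpow hp1.ne', mul_zero]
      exact rpow_nonneg habs p
    · rcases le_or_gt a b with hab | hab
      · have hle : a ^ p / A ^ (p-1) - b ^ p / B ^ (p-1) ≤ 0 := by
          have e1 : a ^ p ≤ b ^ p := rpow_le_rpow ha0 hab (by linarith)
          have e2 : B ^ (p-1) ≤ A ^ (p-1) := rpow_le_rpow hB.le hBA (by linarith)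
          have e3 : (0:ℝ) < B ^ (p-1) := rpow_pos_of_pos hB _
          have : a ^ p / A ^ (p-1) ≤ b ^ p / B ^ (p-1) :=
            div_le_div₀ (rpow_nonneg hb0 p) e1 e3 e2
          linarith
        have : (a ^ p / A ^ (p-1) - b ^ p / B ^ (p-1)) * (A - B) ^ (p-1) ≤ 0 :=
          mul_nonpos_of_nonpos_of_nonneg hle (rpow_nonneg (by linarith) _)
        exact le_trans this (rpow_nonneg habs p)
      · -- b < a
        have key := radon2 hp.le (by linarith : (0:ℝ) ≤ a - b) hb0
          (by linarith : (0:ℝ) < A - B) hB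
        rw [sub_add_cancel, sub_add_cancel] at key
        have hApow : (0:ℝ) < A ^ (p-1) := rpow_pos_of_pos hA _
        have hABpow : (0:ℝ) < (A - B) ^ (p-1) := rpow_pos_of_pos (by linarith) _
        have h4 : a ^ p / A ^ (p-1) - b ^ p / B ^ (p-1) ≤ (a - b) ^ p / (A - B) ^ (p-1) := by
          have := (div_le_iff₀ hApow).2 key
          linarith [(div_le_iff₀ hApow).mpr key]
        have h5 : (a ^ p / A ^ (p-1) - b ^ p / B ^ (p-1)) * (A - B) ^ (p-1) ≤ (a - b) ^ p := by
          calc (a ^ p / A ^ (p-1) - b ^ p / B ^ (p-1)) * (A - B) ^ (p-1)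
              ≤ ((a - b) ^ p / (A - B) ^ (p-1)) * (A - B) ^ (p-1) := by
                exact mul_le_mul_of_nonneg_right h4 hABpow.le
            _ = (a - b) ^ p := div_mul_cancel₀ _ hABpow.ne'
        refine le_trans h5 ?_
        refine rpow_le_rpow (by linarith) ?_ (by linarith)
        calc a - b = ‖u n‖ - ‖u (n-1)‖ := by rw [ha, hb]
          _ ≤ ‖u n - u (n-1)‖ := norm_sub_norm_le _ _
          _ = ‖u n - u (n-1)‖ := rfl
end

section
/- Let ℓ ≥ 1 be an integer and 1 < p < ∞. Define the generalized discrete Hardy operator H^{(ℓ)} acting on sequences v : {1,2,3,…} → ℂ by (H^{(ℓ)} v)_n = (n+ℓ−1)^{−ℓ} ∑_{k=1}^{n} C(n+ℓ−1−k, ℓ−1) v_k. Then H^{(ℓ)} is a bounded operator on ℓ^p(ℕ) with operator norm at most 1/((1 − 1/p)_ℓ), i.e., for every v ∈ ℓ^p(ℕ), ∑_{n=1}^∞ |(H^{(ℓ)} v)_n|^p ≤ (1/((1 − 1/p)_ℓ))^p ∑_{n=1}^∞ |v_n|^p. -/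
/-- Pochhammer symbol `(a)_ℓ = a(a+1)⋯(a+ℓ-1)`. -/
noncomputable def poch (a : ℝ) (l : ℕ) : ℝ := ∏ i ∈ Finset.range l, (a + i)

/-- The generalized discrete Hardy operator. The sequence `v : ℕ → ℂ` represents a sequence
indexed by the positive integers via `v_k = v (k - 1)`, i.e. index `n : ℕ` stands for the
positive integer `n + 1`. Thus `(Hop l v) n = (n+l)^{-l} ∑_{k=0}^{n} C(n+l-1-k, l-1) v k`,
which is `(H^{(ℓ)}v)_{n+1} = (n+1+ℓ-1)^{-ℓ} ∑_{k=1}^{n+1} C(n+1+ℓ-1-k, ℓ-1) v_k`. -/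
noncomputable def Hop (l : ℕ) (v : ℕ → ℂ) : ℕ → ℂ := fun n =>
  (((n + l : ℕ) : ℂ) ^ l)⁻¹ *
    ∑ k ∈ Finset.range (n + 1), ((n + l - 1 - k).choose (l - 1) : ℂ) * v k

open Finset

/-- binomial two-term lower bound -/
lemma binom_two_term (L : ℕ) {x : ℝ} (hx : 0 ≤ x) :
    x ^ (L+1) + ((L:ℝ)+1) * x ^ L ≤ (x+1) ^ (L+1) := by
  induction L with
  | zero => simp
  | succ L ih =>
    have h1 : (x+1) ^ (L+2) = (x+1) * (x+1) ^ (L+1) := by ring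
    have h2 : (x+1) * (x ^ (L+1) + ((L:ℝ)+1) * x ^ L) ≤ (x+1) * (x+1)^(L+1) :=
      mul_le_mul_of_nonneg_left ih (by linarith)
    have h3 : 0 ≤ x ^ L := pow_nonneg hx L
    have h4 : x ^ (L+2) = x * x ^ (L+1) := by ring
    have h5 : x ^ (L+1) = x * x ^ L := by ring
    push_cast
    nlinarith [h2, h3]

/-- Key pointwise inequality for the weighted Hardy telescoping argument. -/
lemma alg_ineq {p : ℝ} (hp : 1 < p) (L : ℕ) {x A B U : ℝ}
    (hx : 0 ≤ x) (hA : 0 ≤ A) (hB : 0 ≤ B) (hU : 0 ≤ U)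
    (hxL : 0 < x ^ L)
    (hid : x ^ L * U = (x+1) ^ (L+1) * A - x ^ (L+1) * B) :
    ((L:ℝ) + 1 - 1/p) * A ^ p ≤ A ^ (p-1) * U + (x/p) * B ^ p - ((x+1)/p) * A ^ p := by
  have hp0 : (0:ℝ) < p := by linarith
  have hip : 0 < 1/p := by positivity
  have hip1 : 1/p < 1 := by rw [div_lt_one hp0]; exact hp
  have hPnn : 0 ≤ A ^ p := Real.rpow_nonneg hA p
  have hRnn : 0 ≤ B ^ p := Real.rpow_nonneg hB p
  have hQnn : 0 ≤ A ^ (p-1) := Real.rpow_nonneg hA (p-1)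
  rcases eq_or_lt_of_le hA with h0 | hApos
  · -- A = 0
    have hA0 : A = 0 := h0.symm
    subst hA0
    rw [Real.zero_rpow (by positivity : p ≠ 0), Real.zero_rpow (by intro h; rw [sub_eq_zero] at h; linarith : p - 1 ≠ 0)]
    have : 0 ≤ (x/p) * B ^ p := by positivity
    simpa using this
  · -- A > 0
    set P := A ^ p with hP
    set Q := A ^ (p-1) with hQ
    set R := B ^ p with hR
    have hQA : Q * A = P := by
      rw [hQ, hP, ← Real.rpow_add_one (ne_of_gt hApos)]
      ring_nf
    -- Young's inequality with conjugate exponents (q, p), q = p/(p-1)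
    have hpq : p.HolderConjugate (p.conjExponent) := Real.HolderConjugate.conjExponent hp
    have hyoung : Q * B ≤ (1 - 1/p) * P + (1/p) * R := by
      have h := Real.young_inequality_of_nonneg hQnn hB hpq.symm
      -- Q * B ≤ Q ^ q / q + B ^ p / p  with q = conjExponent p
      have hqval : 1 / p.conjExponent = 1 - 1/p := by
        rw [one_div, ← hpq.one_sub_inv, one_div]
      have hQq : Q ^ (p.conjExponent) = P := by
        rw [hQ, ← Real.rpow_mul hA, hP]
        congr 1
        exact hpq.sub_one_mul_conj
      rw [hQq] at h
      calc Q * B ≤ P / p.conjExponent + B ^ p / p := h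
        _ = (1 - 1/p) * P + (1/p) * R := by
            rw [div_eq_mul_inv P, ← one_div, hqval, hR]; ring
    -- main chain
    have hkey : (x+1)^(L+1) * P - (x * x^L) * ((1 - 1/p) * P + (1/p) * R) ≤ x^L * (Q * U) := by
      have e1 : x^L * (Q * U) = Q * (x^L * U) := by ring
      rw [e1, hid]
      have e2 : Q * ((x+1)^(L+1) * A - x^(L+1) * B)
          = (x+1)^(L+1) * (Q*A) - x^(L+1) * (Q*B) := by ring
      rw [e2, hQA]
      have e3 : x^(L+1) = x * x^L := by ring
      rw [e3]
      have := mul_le_mul_of_nonneg_left hyoung (by positivity : 0 ≤ x * x^L)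
      linarith
    have hbin : x * x^L + ((L:ℝ)+1) * x^L ≤ (x+1)^(L+1) := by
      have := binom_two_term L hx
      have e3 : x^(L+1) = x * x^L := by ring
      linarith [this, e3.symm.le]
    have hbinP := mul_le_mul_of_nonneg_right hbin hPnn
    -- multiply goal by x^L > 0
    rw [← mul_le_mul_iff_right₀ hxL]
    have e1 : x / p = x * (1/p) := by ring
    have e2 : (x+1) / p = (x+1) * (1/p) := by ring
    rw [e1, e2]
    set ip := 1/p with hipdef
    linarith [hkey, hbinP]
section WH
variable {p : ℝ}

noncomputable def Sp (L : ℕ) (u : ℕ → ℝ) (n : ℕ) : ℝ :=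
  ∑ m ∈ Finset.range n, ((m + L : ℕ) : ℝ) ^ L * u m

noncomputable def Gp (L : ℕ) (u : ℕ → ℝ) (n : ℕ) : ℝ :=
  Sp L u n / ((n + L : ℕ) : ℝ) ^ (L + 1)

lemma Sp_nonneg (L : ℕ) (u : ℕ → ℝ) (hu : ∀ m, 0 ≤ u m) (n : ℕ) : 0 ≤ Sp L u n :=
  Finset.sum_nonneg fun m _ => mul_nonneg (by positivity) (hu m)

lemma Gp_nonneg (L : ℕ) (u : ℕ → ℝ) (hu : ∀ m, 0 ≤ u m) (n : ℕ) : 0 ≤ Gp L u n :=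
  div_nonneg (Sp_nonneg L u hu n) (by positivity)

lemma Gp_zero (L : ℕ) (u : ℕ → ℝ) : Gp L u 0 = 0 := by
  simp [Gp, Sp]

lemma Sp_eq (L : ℕ) (u : ℕ → ℝ) (n : ℕ) :
    ((n + L : ℕ) : ℝ) ^ (L + 1) * Gp L u n = Sp L u n := by
  by_cases h : n = 0
  · subst h; simp [Gp, Sp]
  · have hpos : 0 < n + L := by omega
    have : (((n + L : ℕ) : ℝ)) ^ (L+1) ≠ 0 := by positivity
    rw [Gp, mul_comm, div_mul_cancel₀ _ this]

lemma alg_ineq' {p : ℝ} (hp : 1 < p) (L : ℕ) {x A B U : ℝ}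
    (hx : 0 ≤ x) (hA : 0 ≤ A) (hB : 0 ≤ B) (hU : 0 ≤ U)
    (hxL : 0 < x ^ L)
    (hid : x ^ L * U = (x+1) ^ (L+1) * A - x ^ (L+1) * B) :
    ((L:ℝ) + 1 - 1/p) * A ^ p ≤ A ^ (p-1) * U + (x/p) * B ^ p - ((x+1)/p) * A ^ p :=
  alg_ineq hp L hx hA hB hU hxL hid

lemma ptwise (hp : 1 < p) (L : ℕ) (u : ℕ → ℝ) (hu : ∀ m, 0 ≤ u m) (n : ℕ) :
    ((L:ℝ) + 1 - 1/p) * (Gp L u (n+1)) ^ p ≤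
      (Gp L u (n+1)) ^ (p-1) * u n
        + (((n + L : ℕ) : ℝ)/p) * (Gp L u n) ^ p
        - (((n + 1 + L : ℕ) : ℝ)/p) * (Gp L u (n+1)) ^ p := by
  have hx : (0:ℝ) ≤ ((n + L : ℕ) : ℝ) := Nat.cast_nonneg _
  have hxL : 0 < ((n + L : ℕ) : ℝ) ^ L := by
    rcases Nat.eq_zero_or_pos L with h | h
    · subst h; simp
    · have : 0 < n + L := by omega
      exact pow_pos (by exact_mod_cast this) L
  have hcast : ((n + 1 + L : ℕ) : ℝ) = ((n + L : ℕ) : ℝ) + 1 := by push_cast; ring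
  have hid : ((n + L : ℕ) : ℝ) ^ L * u n
      = (((n + L : ℕ) : ℝ) + 1) ^ (L+1) * Gp L u (n+1)
        - ((n + L : ℕ) : ℝ) ^ (L+1) * Gp L u n := by
    rw [← hcast, Sp_eq L u (n+1), Sp_eq L u n, Sp, Finset.sum_range_succ, Sp]
    ring
  have h := alg_ineq' hp L hx (Gp_nonneg L u hu (n+1)) (Gp_nonneg L u hu n) (hu n) hxL hid
  rw [hcast]
  exact h

lemma whardy (hp : 1 < p) (L : ℕ) (u : ℕ → ℝ) (hu : ∀ m, 0 ≤ u m) (N : ℕ) :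
    ((L:ℝ) + 1 - 1/p) * ∑ n ∈ Finset.range N, (Gp L u (n+1)) ^ p
      ≤ ∑ n ∈ Finset.range N, (Gp L u (n+1)) ^ (p-1) * u n := by
  have hp0 : (0:ℝ) < p := by linarith
  set f : ℕ → ℝ := fun n => (((n + L : ℕ) : ℝ)/p) * (Gp L u n) ^ p with hf
  have hstep : ∀ n ∈ Finset.range N,
      ((L:ℝ) + 1 - 1/p) * (Gp L u (n+1)) ^ p
        ≤ (Gp L u (n+1)) ^ (p-1) * u n + (f n - f (n+1)) := by
    intro n _
    have := ptwise hp L u hu n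
    simp only [hf]
    linarith [this]
  calc ((L:ℝ) + 1 - 1/p) * ∑ n ∈ Finset.range N, (Gp L u (n+1)) ^ p
      = ∑ n ∈ Finset.range N, ((L:ℝ) + 1 - 1/p) * (Gp L u (n+1)) ^ p := by
        rw [Finset.mul_sum]
    _ ≤ ∑ n ∈ Finset.range N, ((Gp L u (n+1)) ^ (p-1) * u n + (f n - f (n+1))) :=
        Finset.sum_le_sum hstep
    _ = (∑ n ∈ Finset.range N, (Gp L u (n+1)) ^ (p-1) * u n) + (f 0 - f N) := by
        rw [Finset.sum_add_distrib, Finset.sum_range_sub' f N]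
    _ ≤ ∑ n ∈ Finset.range N, (Gp L u (n+1)) ^ (p-1) * u n := by
        have hf0 : f 0 = 0 := by
          simp only [hf, Gp_zero, Real.zero_rpow (ne_of_gt hp0)]
          ring
        have hfN : 0 ≤ f N := by
          apply mul_nonneg (by positivity)
          exact Real.rpow_nonneg (Gp_nonneg L u hu N) p
        linarith

lemma whardy2 (hp : 1 < p) (L : ℕ) (u : ℕ → ℝ) (hu : ∀ m, 0 ≤ u m) (N : ℕ) :
    ∑ n ∈ Finset.range N, (Gp L u (n+1)) ^ p
      ≤ (1/((L:ℝ) + 1 - 1/p)) ^ p * ∑ n ∈ Finset.range N, (u n) ^ p := by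
  have hp0 : (0:ℝ) < p := by linarith
  have hip1 : 1/p < 1 := by rw [div_lt_one hp0]; exact hp
  set s : ℝ := (L:ℝ) + 1 - 1/p with hs
  have hspos : 0 < s := by
    have : (0:ℝ) ≤ (L:ℝ) := Nat.cast_nonneg _
    simp only [hs]; linarith
  set SS : ℝ := ∑ n ∈ Finset.range N, (Gp L u (n+1)) ^ p with hSS
  set UU : ℝ := ∑ n ∈ Finset.range N, (u n) ^ p with hUU
  have hSS0 : 0 ≤ SS :=
    Finset.sum_nonneg fun n _ => Real.rpow_nonneg (Gp_nonneg L u hu (n+1)) p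
  have hUU0 : 0 ≤ UU := Finset.sum_nonneg fun n _ => Real.rpow_nonneg (hu n) p
  have hpq : p.HolderConjugate p.conjExponent := Real.HolderConjugate.conjExponent hp
  set q : ℝ := p.conjExponent with hqdef
  -- Hölder
  have holder : ∑ n ∈ Finset.range N, (Gp L u (n+1)) ^ (p-1) * u n ≤ SS ^ (1/q) * UU ^ (1/p) := by
    have h := Real.inner_le_Lp_mul_Lq_of_nonneg (Finset.range N)
      (f := fun n => (Gp L u (n+1)) ^ (p-1)) (g := fun n => u n) hpq.symm
      (fun n _ => Real.rpow_nonneg (Gp_nonneg L u hu (n+1)) (p-1))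
      (fun n _ => hu n)
    have hfq : ∑ n ∈ Finset.range N, ((Gp L u (n+1)) ^ (p-1)) ^ q = SS := by
      apply Finset.sum_congr rfl
      intro n _
      rw [← Real.rpow_mul (Gp_nonneg L u hu (n+1))]
      congr 1
      exact hpq.sub_one_mul_conj
    rw [hfq] at h
    exact h
  have main : s * SS ≤ SS ^ (1/q) * UU ^ (1/p) := le_trans (whardy hp L u hu N) holder
  rcases eq_or_lt_of_le hSS0 with h0 | hSSpos
  · rw [← h0]
    positivity
  · have hSSq : 0 < SS ^ (1/q) := Real.rpow_pos_of_pos hSSpos _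
    have hsplit : SS = SS ^ (1/q) * SS ^ (1/p) := by
      rw [← Real.rpow_add hSSpos]
      have : 1/q + 1/p = 1 := by
        rw [one_div, one_div, add_comm]
        exact hpq.inv_add_inv_eq_one
      rw [this, Real.rpow_one]
    have key : s * SS ^ (1/p) ≤ UU ^ (1/p) := by
      have h2 : SS ^ (1/q) * (s * SS ^ (1/p)) ≤ SS ^ (1/q) * UU ^ (1/p) := by
        calc SS ^ (1/q) * (s * SS ^ (1/p)) = s * (SS ^ (1/q) * SS ^ (1/p)) := by ring
          _ = s * SS := by rw [← hsplit]
          _ ≤ SS ^ (1/q) * UU ^ (1/p) := main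
      exact le_of_mul_le_mul_left h2 hSSq
    have key2 : (s * SS ^ (1/p)) ^ p ≤ (UU ^ (1/p)) ^ p :=
      Real.rpow_le_rpow (mul_nonneg hspos.le (Real.rpow_nonneg hSS0 _)) key hp0.le
    have e1 : (s * SS ^ (1/p)) ^ p = s ^ p * SS := by
      rw [Real.mul_rpow hspos.le (Real.rpow_nonneg hSS0 _), ← Real.rpow_mul hSS0]
      rw [one_div, inv_mul_cancel₀ (ne_of_gt hp0), Real.rpow_one]
    have e2 : (UU ^ (1/p)) ^ p = UU := by
      rw [← Real.rpow_mul hUU0, one_div, inv_mul_cancel₀ (ne_of_gt hp0), Real.rpow_one]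
    rw [e1, e2] at key2
    have hsp : 0 < s ^ p := Real.rpow_pos_of_pos hspos p
    rw [one_div, Real.inv_rpow hspos.le, inv_mul_eq_div, le_div_iff₀ hsp]
    linarith [key2]
end WH


noncomputable def HR (L : ℕ) (u : ℕ → ℝ) (n : ℕ) : ℝ :=
  (∑ k ∈ Finset.range (n+1), ((n - k + L).choose L : ℝ) * u k) / ((n + L + 1 : ℕ) : ℝ) ^ (L+1)

lemma HR_nonneg (L : ℕ) (u : ℕ → ℝ) (hu : ∀ m, 0 ≤ u m) (n : ℕ) : 0 ≤ HR L u n :=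
  div_nonneg (Finset.sum_nonneg fun k _ => mul_nonneg (by positivity) (hu k)) (by positivity)

lemma double_sum (L : ℕ) (u : ℕ → ℝ) (n : ℕ) :
    ∑ m ∈ Finset.range (n+1), ∑ k ∈ Finset.range (m+1), ((m - k + L).choose L : ℝ) * u k
      = ∑ k ∈ Finset.range (n+1), ((n - k + (L+1)).choose (L+1) : ℝ) * u k := by
  induction n with
  | zero => simp
  | succ n ih =>
    rw [Finset.sum_range_succ
      (f := fun m => ∑ k ∈ Finset.range (m+1), ((m - k + L).choose L : ℝ) * u k), ih]
    rw [Finset.sum_range_succ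
      (f := fun k => ((n + 1 - k + L).choose L : ℝ) * u k)]
    rw [Finset.sum_range_succ
      (f := fun k => ((n + 1 - k + (L+1)).choose (L+1) : ℝ) * u k)]
    have hlast : ((n + 1 - (n+1) + (L+1)).choose (L+1) : ℝ) = ((n + 1 - (n+1) + L).choose L : ℝ) := by
      simp
    rw [hlast]
    have hmain : ∑ k ∈ Finset.range (n+1), ((n - k + (L+1)).choose (L+1) : ℝ) * u k
        + ∑ k ∈ Finset.range (n+1), ((n + 1 - k + L).choose L : ℝ) * u k
        = ∑ k ∈ Finset.range (n+1), ((n + 1 - k + (L+1)).choose (L+1) : ℝ) * u k := by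
      rw [← Finset.sum_add_distrib]
      apply Finset.sum_congr rfl
      intro k hk
      have hkn : k ≤ n := by
        simp only [Finset.mem_range] at hk; omega
      have e1 : n + 1 - k + (L+1) = (n - k + (L+1)) + 1 := by omega
      have e2 : n + 1 - k + L = n - k + (L + 1) := by omega
      rw [e1, e2]
      have : ((n - k + (L+1)) + 1).choose (L+1)
          = (n - k + (L+1)).choose L + (n - k + (L+1)).choose (L+1) := Nat.choose_succ_succ _ _
      rw [this]
      push_cast
      ring
    linarith [hmain]

lemma HR_zero_eq (u : ℕ → ℝ) (n : ℕ) : HR 0 u n = Gp 0 u (n+1) := by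
  simp [HR, Gp, Sp]

lemma HR_succ_eq (L : ℕ) (u : ℕ → ℝ) (n : ℕ) :
    HR (L+1) u n = Gp (L+1) (HR L u) (n+1) := by
  simp only [HR, Gp, Sp]
  have hden : ((n + (L+1) + 1 : ℕ) : ℝ) ^ (L+1+1) = (((n+1) + (L+1) : ℕ) : ℝ) ^ (L+1+1) := by
    congr 2
    omega
  rw [hden]
  congr 1
  rw [← double_sum L u n]
  apply Finset.sum_congr rfl
  intro m _
  have hne : (((m + (L+1) : ℕ) : ℝ)) ^ (L+1) ≠ 0 := by
    have : 0 < m + (L+1) := by omega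
    positivity
  rw [mul_comm]
  exact (div_mul_cancel₀ _ hne).symm

lemma poch_pos {a : ℝ} (ha : 0 < a) (l : ℕ) : 0 < poch a l := by
  apply Finset.prod_pos
  intro i _
  have : (0:ℝ) ≤ (i:ℝ) := Nat.cast_nonneg i
  linarith

lemma main_bound {p : ℝ} (hp : 1 < p) (L : ℕ) :
    ∀ u : ℕ → ℝ, (∀ k, 0 ≤ u k) → ∀ N,
      ∑ n ∈ Finset.range N, (HR L u n) ^ p
        ≤ (1 / poch (1 - 1/p) (L+1)) ^ p * ∑ n ∈ Finset.range N, u n ^ p := by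
  have hp0 : (0:ℝ) < p := by linarith
  have hip1 : 1/p < 1 := by rw [div_lt_one hp0]; exact hp
  have ha : 0 < 1 - 1/p := by linarith
  induction L with
  | zero =>
    intro u hu N
    have h := whardy2 hp 0 u hu N
    have e : ∀ n, HR 0 u n = Gp 0 u (n+1) := fun n => HR_zero_eq u n
    have e2 : poch (1 - 1/p) 1 = (0:ℝ) + 1 - 1/p := by
      simp [poch]
    rw [e2]
    calc ∑ n ∈ Finset.range N, (HR 0 u n) ^ p
        = ∑ n ∈ Finset.range N, (Gp 0 u (n+1)) ^ p := by
          apply Finset.sum_congr rfl; intro n _; rw [e n]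
      _ ≤ (1/((0:ℕ) + 1 - 1/p)) ^ p * ∑ n ∈ Finset.range N, u n ^ p := by
          have := whardy2 hp 0 u hu N
          simpa using this
      _ = (1/((0:ℝ) + 1 - 1/p)) ^ p * ∑ n ∈ Finset.range N, u n ^ p := by norm_num
  | succ L ih =>
    intro u hu N
    have hg : ∀ m, 0 ≤ HR L u m := HR_nonneg L u hu
    have step := whardy2 hp (L+1) (HR L u) hg N
    have e : ∀ n, HR (L+1) u n = Gp (L+1) (HR L u) (n+1) := fun n => HR_succ_eq L u n
    have hXc : (0:ℝ) < ((L+1:ℕ):ℝ) + 1 - 1/p := by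
      have : (0:ℝ) ≤ ((L+1:ℕ):ℝ) := Nat.cast_nonneg _
      linarith
    have hcst : (0:ℝ) ≤ (1/(((L+1:ℕ):ℝ) + 1 - 1/p)) ^ p := by
      apply Real.rpow_nonneg
      positivity
    calc ∑ n ∈ Finset.range N, (HR (L+1) u n) ^ p
        = ∑ n ∈ Finset.range N, (Gp (L+1) (HR L u) (n+1)) ^ p := by
          apply Finset.sum_congr rfl; intro n _; rw [e n]
      _ ≤ (1/(((L+1:ℕ):ℝ) + 1 - 1/p)) ^ p * ∑ n ∈ Finset.range N, (HR L u n) ^ p := step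
      _ ≤ (1/(((L+1:ℕ):ℝ) + 1 - 1/p)) ^ p
            * ((1 / poch (1 - 1/p) (L+1)) ^ p * ∑ n ∈ Finset.range N, u n ^ p) := by
          apply mul_le_mul_of_nonneg_left (ih u hu N) hcst
      _ = (1 / poch (1 - 1/p) (L+2)) ^ p * ∑ n ∈ Finset.range N, u n ^ p := by
          rw [← mul_assoc]
          congr 1
          have hY : (0:ℝ) < poch (1 - 1/p) (L+1) := poch_pos ha (L+1)
          have hE : (1 / poch (1 - 1/p) (L+2))
              = (1/(((L+1:ℕ):ℝ) + 1 - 1/p)) * (1 / poch (1 - 1/p) (L+1)) := by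
            have hsucc : poch (1 - 1/p) (L+2)
                = poch (1 - 1/p) (L+1) * ((1 - 1/p) + ((L+1:ℕ):ℝ)) := by
              rw [show L+2 = (L+1)+1 from rfl, poch, Finset.prod_range_succ, ← poch]
            have hc : (1 - 1/p) + ((L+1:ℕ):ℝ) = ((L+1:ℕ):ℝ) + 1 - 1/p := by ring
            rw [hsucc, hc]
            rw [one_div, one_div, one_div, mul_inv]
            ring
          rw [← Real.mul_rpow (by positivity) (by positivity), ← hE]


/-- The generalized discrete Hardy operator is bounded on `ℓ^p` with norm at most
`1/((1 - 1/p)_ℓ)`. -/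
theorem Hardy_operator_bounded (l : ℕ) (hl : 1 ≤ l) (p : ℝ) (hp : 1 < p)
    (v : ℕ → ℂ) (hv : Summable fun n => ‖v n‖ ^ p) :
    (Summable fun n => ‖Hop l v n‖ ^ p) ∧
      ∑' n : ℕ, ‖Hop l v n‖ ^ p ≤
        (1 / poch (1 - 1 / p) l) ^ p * ∑' n : ℕ, ‖v n‖ ^ p := by
  obtain ⟨L, rfl⟩ : ∃ L, l = L + 1 := ⟨l - 1, by omega⟩
  have hp0 : (0:ℝ) < p := by linarith
  have hip1 : 1/p < 1 := by rw [div_lt_one hp0]; exact hp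
  have ha : 0 < 1 - 1/p := by linarith
  set g : ℕ → ℝ := fun k => ‖v k‖ with hg
  have hgnn : ∀ k, 0 ≤ g k := fun k => norm_nonneg _
  have habs : ∀ n, ‖Hop (L+1) v n‖ ≤ HR L g n := by
    intro n
    rw [Hop]
    rw [norm_mul, norm_inv, norm_pow, Complex.norm_natCast]
    have hnum : ‖∑ k ∈ Finset.range (n+1),
          ((n + (L+1) - 1 - k).choose ((L+1) - 1) : ℂ) * v k‖
        ≤ ∑ k ∈ Finset.range (n+1), ((n - k + L).choose L : ℝ) * g k := by
      refine le_trans (norm_sum_le _ _) ?_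
      apply Finset.sum_le_sum
      intro k hk
      rw [norm_mul]
      have hidx : n + (L+1) - 1 - k = n - k + L := by
        simp only [Finset.mem_range] at hk; omega
      have : ‖((n + (L+1) - 1 - k).choose ((L+1) - 1) : ℂ)‖
          = ((n - k + L).choose L : ℝ) := by
        rw [hidx]
        simp [Complex.norm_natCast]
      rw [this]
    calc (((n + (L+1) : ℕ) : ℝ) ^ (L+1))⁻¹ * ‖∑ k ∈ Finset.range (n+1),
          ((n + (L+1) - 1 - k).choose ((L+1) - 1) : ℂ) * v k‖
        ≤ (((n + (L+1) : ℕ) : ℝ) ^ (L+1))⁻¹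
            * ∑ k ∈ Finset.range (n+1), ((n - k + L).choose L : ℝ) * g k := by
          apply mul_le_mul_of_nonneg_left hnum
          positivity
      _ = HR L g n := by
          rw [inv_mul_eq_div]
          rfl
  have hpnn : ∀ n, (0:ℝ) ≤ ‖Hop (L+1) v n‖ ^ p :=
    fun n => Real.rpow_nonneg (norm_nonneg _) p
  have hpow : ∀ n, ‖Hop (L+1) v n‖ ^ p ≤ (HR L g n) ^ p :=
    fun n => Real.rpow_le_rpow (norm_nonneg _) (habs n) hp0.le
  have hvg : Summable (fun n => g n ^ p) := hv
  have hconst : (0:ℝ) ≤ (1 / poch (1 - 1/p) (L+1)) ^ p := by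
    apply Real.rpow_nonneg
    have := poch_pos ha (L+1)
    positivity
  have hbound : ∀ N, ∑ n ∈ Finset.range N, ‖Hop (L+1) v n‖ ^ p
      ≤ (1 / poch (1 - 1/p) (L+1)) ^ p * ∑' n, g n ^ p := by
    intro N
    calc ∑ n ∈ Finset.range N, ‖Hop (L+1) v n‖ ^ p
        ≤ ∑ n ∈ Finset.range N, (HR L g n) ^ p :=
          Finset.sum_le_sum fun n _ => hpow n
      _ ≤ (1 / poch (1 - 1/p) (L+1)) ^ p * ∑ n ∈ Finset.range N, g n ^ p :=
          main_bound hp L g hgnn N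
      _ ≤ (1 / poch (1 - 1/p) (L+1)) ^ p * ∑' n, g n ^ p := by
          apply mul_le_mul_of_nonneg_left _ hconst
          exact Summable.sum_le_tsum (Finset.range N)
            (fun i _ => Real.rpow_nonneg (hgnn i) p) hvg
  exact ⟨summable_of_sum_range_le hpnn hbound,
    Real.tsum_le_of_sum_range_le hpnn hbound⟩
end

section
/- Let p > 1 and 0 ≤ α < p − 1 be real numbers, and define H(x) = (1 − ((α+1)/p)x)^{1−p} − (1+x)^α for x ∈ [0,1] and ρ_n = ((p − α − 1)/p)^{p−1} n^{α−p+1} H(1/n) for integers n ≥ 1. Then for every finitely supported sequence u : ℕ → ℂ with u_0 = 0, one has ∑_{n=1}^∞ n^α |u_n − u_{n−1}|^p ≥ ∑_{n=1}^∞ ρ_n |u_n|^p; moreover ρ_n > ((p−α−1)/p)^p n^{α−p} for every n ≥ 1, so this improves the classical Copson inequality ∑_{n=1}^∞ n^α |u_n − u_{n−1}|^p ≥ ((p−α−1)/p)^p ∑_{n=1}^∞ n^{α−p} |u_n|^p. -/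
/-- The auxiliary function `H(x) = (1 - ((α+1)/p)x)^{1-p} - (1+x)^α`. -/
noncomputable def Hfun (p α x : ℝ) : ℝ := (1 - ((α + 1) / p) * x) ^ (1 - p) - (1 + x) ^ α

/-- The improved Copson weight `ρ_n = ((p-α-1)/p)^{p-1} n^{α-p+1} H(1/n)`. -/
noncomputable def rho (p α : ℝ) (n : ℕ) : ℝ :=
  ((p - α - 1) / p) ^ (p - 1) * (n : ℝ) ^ (α - p + 1) * Hfun p α (1 / n)

open Real

/-- Strict Bernoulli for negative exponents. -/
lemma bern_neg {t q : ℝ} (ht0 : 0 < t) (ht1 : t < 1) (hq : 0 < q) :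
    1 + q * t < (1 - t) ^ (-q : ℝ) := by
  have h1t : (0:ℝ) < 1 - t := by linarith
  have hqt : (0:ℝ) < 1 + q * t := by positivity
  have h1 : (1 - t) ^ q ≤ exp (-t) ^ q := by
    apply rpow_le_rpow h1t.le _ hq.le
    linarith [add_one_le_exp (-t)]
  have h2 : exp (-t) ^ q = exp (-(t*q)) := by
    rw [← exp_mul]; ring_nf
  have h3 : exp (-(t*q)) < (1 + q*t)⁻¹ := by
    rw [exp_neg]
    apply inv_strictAnti₀ hqt
    have := add_one_lt_exp (x := t*q) (by positivity)
    linarith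
  have h4 : (1 - t) ^ q < (1 + q*t)⁻¹ := by rw [← h2] at h3; linarith
  have h5 : (0:ℝ) < (1 - t) ^ q := rpow_pos_of_pos h1t q
  rw [rpow_neg h1t.le]
  calc 1 + q*t = ((1+q*t)⁻¹)⁻¹ := by rw [inv_inv]
    _ < ((1-t)^q)⁻¹ := by exact inv_strictAnti₀ h5 h4

/-- Core convexity inequality. -/
lemma core_ineq {p : ℝ} (hp : 1 < p) {β x y z : ℝ} (hβ : 0 < β) (hx : 0 ≤ x) (hy : 0 ≤ y)
    (hz : 0 ≤ z) (h : x ≤ z + y) :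
    (β / (1 + β)) ^ (p - 1) * x ^ p ≤ z ^ p + β ^ (p - 1) * y ^ p := by
  have hβ1 : (0:ℝ) < 1 + β := by linarith
  set l : ℝ := β / (1 + β) with hl
  set m : ℝ := 1 / (1 + β) with hm
  have hl0 : 0 < l := by positivity
  have hm0 : 0 < m := by positivity
  have hlm : l + m = 1 := by rw [hl, hm]; field_simp; ring
  have hconv := (convexOn_rpow hp.le).2 (Set.mem_Ici.2 (by positivity : (0:ℝ) ≤ z / l))
    (Set.mem_Ici.2 (by positivity : (0:ℝ) ≤ y / m)) hl0.le hm0.le hlm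
  simp only [smul_eq_mul] at hconv
  have e1 : l * (z / l) + m * (y / m) = z + y := by field_simp
  rw [e1] at hconv
  have h1 : x ^ p ≤ (z + y) ^ p := rpow_le_rpow hx h (by positivity)
  have e2 : l * (z / l) ^ p = l ^ (1 - p) * z ^ p := by
    rw [div_rpow hz hl0.le, rpow_sub hl0, rpow_one]
    field_simp
  have e3 : m * (y / m) ^ p = m ^ (1 - p) * y ^ p := by
    rw [div_rpow hy hm0.le, rpow_sub hm0, rpow_one]
    field_simp
  rw [e2, e3] at hconv
  -- multiply by l ^ (p-1)
  have key : l ^ (p-1) * (z+y) ^ p ≤ z ^ p + β ^ (p-1) * y ^ p := by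
    have hmul := mul_le_mul_of_nonneg_left hconv (le_of_lt (rpow_pos_of_pos hl0 (p-1)))
    have e4 : l ^ (p-1) * (l ^ (1-p) * z ^ p) = z ^ p := by
      rw [← mul_assoc, ← rpow_add hl0]
      norm_num
    have e5 : l ^ (p-1) * (m ^ (1-p) * y ^ p) = β ^ (p-1) * y ^ p := by
      rw [← mul_assoc]
      congr 1
      rw [show (1-p) = -(p-1) by ring, rpow_neg hm0.le, ← div_eq_mul_inv, ← div_rpow hl0.le hm0.le]
      congr 1
      rw [hl, hm]
      field_simp
    rw [mul_add, e4, e5] at hmul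
    exact hmul
  calc l ^ (p-1) * x ^ p ≤ l ^ (p-1) * (z+y) ^ p :=
        mul_le_mul_of_nonneg_left h1 (le_of_lt (rpow_pos_of_pos hl0 (p-1)))
    _ ≤ z ^ p + β ^ (p-1) * y ^ p := key

noncomputable def Acoef (p α : ℝ) (m : ℕ) : ℝ :=
  ((p - α - 1) / p) ^ (p - 1) * (m : ℝ) ^ α * ((m : ℝ) - (α + 1) / p) ^ (1 - p)

noncomputable def Bcoef (p α : ℝ) (m : ℕ) : ℝ :=
  ((p - α - 1) / p) ^ (p - 1) * ((m : ℝ) - 1) ^ (1 - p) * (m : ℝ) ^ α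

lemma rho_eq (p α : ℝ) (hp : 1 < p) (hα0 : 0 ≤ α) (hα : α < p - 1) (m : ℕ) (hm : 1 ≤ m) :
    rho p α m = Acoef p α m - Bcoef p α (m + 1) := by
  have hp0 : (0:ℝ) < p := by linarith
  have hn1 : (1:ℝ) ≤ (m:ℝ) := by exact_mod_cast hm
  have hn0 : (0:ℝ) < (m:ℝ) := by linarith
  have hD1 : (α + 1) / p < 1 := by rw [div_lt_one hp0]; linarith
  have hD0 : 0 < (α + 1) / p := by positivity
  have hin : 0 ≤ 1 - ((α + 1) / p) * (1 / (m:ℝ)) := by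
    have : ((α + 1) / p) * (1 / (m:ℝ)) ≤ (α + 1) / p * 1 := by
      apply mul_le_mul_of_nonneg_left _ hD0.le
      rw [div_le_one hn0] at *; linarith
    nlinarith
  have key1 : (m:ℝ) ^ (α - p + 1) * (1 - ((α + 1) / p) * (1 / (m:ℝ))) ^ (1 - p)
      = (m:ℝ) ^ α * ((m:ℝ) - (α + 1) / p) ^ (1 - p) := by
    rw [show α - p + 1 = α + (1 - p) by ring, rpow_add hn0, mul_assoc]
    congr 1
    rw [← mul_rpow hn0.le hin]
    congr 1
    field_simp
  have key2 : (m:ℝ) ^ (α - p + 1) * (1 + 1 / (m:ℝ)) ^ α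
      = (m:ℝ) ^ (1 - p) * ((m:ℝ) + 1) ^ α := by
    rw [show α - p + 1 = (1 - p) + α by ring, rpow_add hn0, mul_assoc]
    congr 1
    rw [← mul_rpow hn0.le (by positivity)]
    congr 1
    field_simp
  simp only [rho, Hfun, Acoef, Bcoef, Nat.cast_add, Nat.cast_one]
  rw [show ((m:ℝ) + 1 - 1) = (m:ℝ) by ring]
  linear_combination (((p - α - 1) / p) ^ (p - 1)) * key1
    - (((p - α - 1) / p) ^ (p - 1)) * key2

lemma step (p α : ℝ) (hp : 1 < p) (hα0 : 0 ≤ α) (hα : α < p - 1) (m : ℕ) (hm : 1 ≤ m)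
    {x y z : ℝ} (hx : 0 ≤ x) (hy : 0 ≤ y) (hz : 0 ≤ z) (hxyz : x ≤ z + y)
    (hy1 : m = 1 → y = 0) :
    Acoef p α m * x ^ p - Bcoef p α m * y ^ p ≤ (m : ℝ) ^ α * z ^ p := by
  have hp0 : (0:ℝ) < p := by linarith
  have hC0 : 0 < (p - α - 1) / p := by
    apply div_pos (by linarith) hp0
  rcases eq_or_lt_of_le hm with h1 | h2
  · -- m = 1
    have hm1 : m = 1 := h1.symm
    subst hm1
    have hy0 : y = 0 := hy1 rfl
    subst hy0
    have hA1 : Acoef p α 1 = 1 := by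
      simp only [Acoef, Nat.cast_one, one_rpow, mul_one]
      rw [show (1:ℝ) - (α+1)/p = (p - α - 1)/p by field_simp; ring]
      rw [← rpow_add hC0]
      norm_num
    rw [hA1]
    simp only [Nat.cast_one, one_rpow, one_mul]
    have : (0:ℝ) ^ p = 0 := zero_rpow (by positivity)
    rw [this, mul_zero, sub_zero]
    exact rpow_le_rpow hx (by linarith) hp0.le
  · -- 2 ≤ m
    have hm2 : (2:ℕ) ≤ m := h2
    have hn1 : (1:ℝ) ≤ (m:ℝ) - 1 := by
      have : (2:ℝ) ≤ (m:ℝ) := by exact_mod_cast hm2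
      linarith
    have hn0 : (0:ℝ) < (m:ℝ) - 1 := by linarith
    set β : ℝ := ((p - α - 1) / p) / ((m:ℝ) - 1) with hβdef
    have hβ : 0 < β := by positivity
    have hcore := core_ineq hp hβ hx hy hz hxyz
    have hmα : (0:ℝ) < (m:ℝ) ^ α := rpow_pos_of_pos (by linarith) α
    have hd0 : (0:ℝ) < (m:ℝ) - (α + 1) / p := by
      have : (α + 1) / p < 1 := by rw [div_lt_one hp0]; linarith
      linarith
    have hA : Acoef p α m = (m:ℝ) ^ α * (β / (1 + β)) ^ (p - 1) := by
      have e : β / (1 + β) = ((p - α - 1) / p) / ((m:ℝ) - (α + 1) / p) := by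
        rw [hβdef]
        field_simp
        ring
      rw [e, div_rpow hC0.le hd0.le, Acoef, show (1:ℝ) - p = -(p-1) by ring,
        rpow_neg hd0.le, div_eq_mul_inv]
      ring
    have hB : Bcoef p α m = (m:ℝ) ^ α * β ^ (p - 1) := by
      rw [hβdef, div_rpow hC0.le hn0.le, Bcoef, show (1:ℝ) - p = -(p-1) by ring,
        rpow_neg hn0.le, div_eq_mul_inv]
      ring
    rw [hA, hB]
    have := mul_le_mul_of_nonneg_left hcore hmα.le
    nlinarith
lemma Hlb (p α : ℝ) (hp : 1 < p) (hα0 : 0 ≤ α) (hα : α < p - 1) {x : ℝ}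
    (hx0 : 0 < x) (hx1 : x ≤ 1) :
    (p - α - 1) / p * x < Hfun p α x := by
  have hp0 : (0:ℝ) < p := by linarith
  set D : ℝ := (α + 1) / p with hDdef
  have hD0 : 0 < D := by rw [hDdef]; positivity
  have hD1 : D < 1 := by rw [hDdef, div_lt_one hp0]; linarith
  have hpD : p * D = α + 1 := by rw [hDdef]; field_simp
  have hC : (p - α - 1) / p = 1 - D := by rw [hDdef]; field_simp; ring
  have hDx0 : 0 < D * x := by positivity
  have hDx1 : D * x < 1 := by nlinarith
  have hH : Hfun p α x = (1 - D * x) ^ (1 - p) - (1 + x) ^ α := by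
    rw [Hfun, ← hDdef]
  rw [hH, hC]
  rcases le_or_gt α 1 with hle | hgt
  · -- case α ≤ 1
    have h1 : 1 + (p - 1) * (D * x) < (1 - D * x) ^ (1 - p) := by
      have := bern_neg hDx0 hDx1 (by linarith : (0:ℝ) < p - 1)
      rwa [show -(p-1) = 1 - p by ring] at this
    have h2 : (1 + x) ^ α ≤ 1 + α * x :=
      rpow_one_add_le_one_add_mul_self (by linarith) hα0 hle
    have e1 : 1 + (p - 1) * (D * x) = 1 + (1 - D) * x + α * x := by
      linear_combination x * hpD
    linarith
  · -- case 1 < α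
    have hx2 : (0:ℝ) < 1 + x := by linarith
    have hb : (1 + x) ^ D < 1 + D * x := by
      have := rpow_one_add_lt_one_add_mul_self (s := x) (by linarith) hx0.ne' hD0 hD1
      linarith [this]
    have hbD : (0:ℝ) < (1 + x) ^ D := rpow_pos_of_pos hx2 D
    have step1 : 1 - D * x < ((1 + x) ^ D)⁻¹ := by
      have k2 : 1 - D * x < 1 / (1 + D * x) := by
        rw [lt_div_iff₀ (by nlinarith)]
        nlinarith
      have k3 : 1 / (1 + D * x) < ((1 + x) ^ D)⁻¹ := by
        rw [one_div]
        exact inv_strictAnti₀ hbD hb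
      linarith
    have step2 : (1 + x) ^ (D * (p - 1)) < (1 - D * x) ^ (1 - p) := by
      have hq : (0:ℝ) < p - 1 := by linarith
      have l1 : (1 - D * x) ^ (p - 1) < (((1 + x) ^ D)⁻¹) ^ (p - 1) :=
        rpow_lt_rpow (by linarith) step1 hq
      have l2 : (((1 + x) ^ D)⁻¹) ^ (p - 1) = ((1 + x) ^ (D * (p - 1)))⁻¹ := by
        rw [inv_rpow hbD.le, ← rpow_mul hx2.le]
      rw [l2] at l1
      have l3 := inv_strictAnti₀ (rpow_pos_of_pos (by linarith : (0:ℝ) < 1 - D*x) (p-1)) l1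
      rw [inv_inv] at l3
      rwa [show (1:ℝ) - p = -(p-1) by ring, rpow_neg (by linarith : (0:ℝ) ≤ 1 - D*x)]
    have hDp : D * (p - 1) = α + (1 - D) := by linear_combination hpD
    rw [hDp] at step2
    have hsplit : (1 + x) ^ (α + (1 - D)) = (1 + x) ^ α * (1 + x) ^ (1 - D) :=
      rpow_add hx2 _ _
    set P : ℝ := (1 + x) ^ α with hPdef
    set s : ℝ := (1 + x) ^ (1 - D) with hsdef
    have hPpos : 0 < P := rpow_pos_of_pos hx2 α
    have hspos : 0 < s := rpow_pos_of_pos hx2 (1 - D)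
    have hP : 1 + α * x ≤ P := by
      have := one_add_mul_self_le_rpow_one_add (s := x) (by linarith) hgt.le
      linarith [this]
    have hs1 : s * (1 + x) ^ D = 1 + x := by
      rw [hsdef, ← rpow_add hx2]
      norm_num
    have A1 : 1 + x ≤ s * (1 + D * x) := by nlinarith [mul_le_mul_of_nonneg_left hb.le hspos.le]
    have k2 : (P + (1 - D) * x) * (1 + D * x) ≤ P * (1 + x) := by
      have hPD : 0 ≤ P - 1 - D * x := by nlinarith
      nlinarith [mul_nonneg (mul_nonneg (by linarith : (0:ℝ) ≤ 1 - D) hx0.le) hPD]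
    have k1 : P * (1 + x) ≤ P * s * (1 + D * x) := by
      have := mul_le_mul_of_nonneg_left A1 hPpos.le
      rw [← mul_assoc] at this
      exact this
    have k3 : P + (1 - D) * x ≤ P * s :=
      le_of_mul_le_mul_right (k2.trans k1) (by positivity)
    rw [hsplit] at step2
    linarith

/-- Improved Copson inequality: the weight `ρ_n` works in the Copson inequality and is
pointwise strictly bigger than the classical Copson weight `((p-α-1)/p)^p n^{α-p}`. -/
theorem improved_Copson (p α : ℝ) (hp : 1 < p) (hα0 : 0 ≤ α) (hα : α < p - 1)
    (u : ℕ → ℂ) (hfin : (Function.support u).Finite) (h0 : u 0 = 0) :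
    (∑' n : ℕ, ((n + 1 : ℕ) : ℝ) ^ α * ‖u (n + 1) - u n‖ ^ p ≥
        ∑' n : ℕ, rho p α (n + 1) * ‖u (n + 1)‖ ^ p) ∧
      (∀ n : ℕ, 1 ≤ n → rho p α n > ((p - α - 1) / p) ^ p * (n : ℝ) ^ (α - p)) := by
  have hp0 : (0:ℝ) < p := by linarith
  have hpne : p ≠ 0 := hp0.ne'
  have hC0 : (0:ℝ) < (p - α - 1) / p := div_pos (by linarith) hp0
  constructor
  · -- Part 1
    obtain ⟨N, hN⟩ := hfin.bddAbove
    set M : ℕ := N + 1 with hMdef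
    have hNz : ∀ n, M ≤ n → u n = 0 := by
      intro n hn
      by_contra hne
      have : n ∈ Function.support u := hne
      have := hN this
      omega
    set f : ℕ → ℝ := fun n => ((n + 1 : ℕ) : ℝ) ^ α * ‖u (n + 1) - u n‖ ^ p with hf
    set g : ℕ → ℝ := fun n => rho p α (n + 1) * ‖u (n + 1)‖ ^ p with hg
    have hfz : ∀ n ∉ Finset.range M, f n = 0 := by
      intro n hn
      rw [Finset.mem_range, not_lt] at hn
      have h1 : u (n + 1) = 0 := hNz _ (by omega)
      have h2 : u n = 0 := hNz _ hn
      simp [hf, h1, h2, zero_rpow hpne]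
    have hgz : ∀ n ∉ Finset.range M, g n = 0 := by
      intro n hn
      rw [Finset.mem_range, not_lt] at hn
      have h1 : u (n + 1) = 0 := hNz _ (by omega)
      simp [hg, h1, zero_rpow hpne]
    rw [tsum_eq_sum hfz, tsum_eq_sum hgz, ge_iff_le]
    -- rewrite g-sum via rho_eq
    set G : ℕ → ℝ := fun m => Bcoef p α (m + 1) * ‖u m‖ ^ p with hG
    have hsum1 : ∑ n ∈ Finset.range M, g n =
        (∑ n ∈ Finset.range M, Acoef p α (n + 1) * ‖u (n + 1)‖ ^ p)
          - ∑ n ∈ Finset.range M, G (n + 1) := by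
      rw [← Finset.sum_sub_distrib]
      apply Finset.sum_congr rfl
      intro n _
      simp only [hg, hG]
      rw [rho_eq p α hp hα0 hα (n + 1) (by omega)]
      ring
    have hshift : ∑ n ∈ Finset.range M, G (n + 1) = ∑ n ∈ Finset.range M, G n := by
      have e1 := Finset.sum_range_succ' G M
      have e2 := Finset.sum_range_succ G M
      have hG0 : G 0 = 0 := by simp [hG, h0, zero_rpow hpne]
      have hGM : G M = 0 := by simp [hG, hNz M le_rfl, zero_rpow hpne]
      rw [hG0] at e1
      rw [hGM] at e2
      linarith [e1, e2]
    rw [hsum1, hshift, sub_le_iff_le_add, ← Finset.sum_add_distrib]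
    apply Finset.sum_le_sum
    intro n _
    have htri : ‖u (n + 1)‖ ≤
        ‖u (n + 1) - u n‖ + ‖u n‖ := by
      calc ‖u (n + 1)‖ = ‖(u (n + 1) - u n) + u n‖ := by
            rw [sub_add_cancel]
        _ ≤ _ := norm_add_le _ _
    have hstep := step p α hp hα0 hα (n + 1) (by omega)
      (norm_nonneg (u (n + 1))) (norm_nonneg (u n))
      (norm_nonneg (u (n + 1) - u n)) htri
      (by intro h1; have : n = 0 := by omega
          subst this; simp [h0])
    simp only [hf, hG]
    push_cast at hstep ⊢
    linarith [hstep]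
  · -- Part 2
    intro n hn
    have hn0 : (0:ℝ) < (n:ℝ) := by exact_mod_cast hn
    have hn1 : (1:ℝ) ≤ (n:ℝ) := by exact_mod_cast hn
    have hx0 : (0:ℝ) < 1 / (n:ℝ) := by positivity
    have hx1 : 1 / (n:ℝ) ≤ 1 := by rw [div_le_one hn0]; exact hn1
    have hH := Hlb p α hp hα0 hα hx0 hx1
    set C : ℝ := (p - α - 1) / p with hCdef
    set K : ℝ := C ^ (p - 1) * (n:ℝ) ^ (α - p + 1) with hKdef
    have hK : 0 < K := by rw [hKdef]; positivity
    have eC : C ^ (p - 1) * C = C ^ p := by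
      have h := (rpow_add hC0 (p - 1) 1).symm
      rw [rpow_one] at h
      rw [h]
      norm_num
    have en : (n:ℝ) ^ (α - p + 1) * (1 / (n:ℝ)) = (n:ℝ) ^ (α - p) := by
      rw [one_div, ← rpow_neg_one (n:ℝ), ← rpow_add hn0]
      norm_num
    have keyeq : K * (C * (1 / (n:ℝ))) = C ^ p * (n:ℝ) ^ (α - p) := by
      calc K * (C * (1 / (n:ℝ)))
          = (C ^ (p - 1) * C) * ((n:ℝ) ^ (α - p + 1) * (1 / (n:ℝ))) := by rw [hKdef]; ring
        _ = C ^ p * (n:ℝ) ^ (α - p) := by rw [eC, en]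
    calc C ^ p * (n:ℝ) ^ (α - p) = K * (C * (1 / (n:ℝ))) := keyeq.symm
      _ < K * Hfun p α (1 / (n:ℝ)) := mul_lt_mul_of_pos_left hH hK
      _ = rho p α n := by rw [rho, mul_assoc]
end

section
/- Let p > 1 and α < 0 be real numbers, and define H(x) = (1 − x)^α / (1 − ((α+1)/p)x)^{p−1} − 1 for x ∈ [0,1). Then H(x) > ((p − α − 1)/p) · x for every x ∈ (0,1). -/
open Real

/-- Strict Bernoulli inequality for negative real exponents. -/
lemma bernoulli_neg_strict {t q : ℝ} (ht : -1 < t) (ht' : t ≠ 0) (hq : q < 0) :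
    1 + q * t < (1 + t) ^ q := by
  have h1 : 0 < 1 + t := by linarith
  have hne : 1 + t ≠ 1 := by intro h; apply ht'; linarith
  have hlog : Real.log (1 + t) < t := by
    have := Real.log_lt_sub_one_of_pos h1 hne
    linarith
  have h2 : q * t < q * Real.log (1 + t) := mul_lt_mul_of_neg_left hlog hq
  rw [Real.rpow_def_of_pos h1]
  have h3 := Real.add_one_le_exp (Real.log (1 + t) * q)
  nlinarith [h3]

/-- The auxiliary function `H(x) = (1-x)^α / (1 - ((α+1)/p)x)^{p-1} - 1` satisfies
`H(x) > ((p-α-1)/p) x` on `(0,1)`. -/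
theorem aux_H_ineq_neg (p α : ℝ) (hp : 1 < p) (hα : α < 0)
    (x : ℝ) (hx : x ∈ Set.Ioo (0 : ℝ) 1) :
    (1 - x) ^ α / (1 - ((α + 1) / p) * x) ^ (p - 1) - 1 > ((p - α - 1) / p) * x := by
  obtain ⟨hx0, hx1⟩ := hx
  have hp0 : (0 : ℝ) < p := by linarith
  have h1x : (0 : ℝ) < 1 - x := by linarith
  -- positivity of the denominator base
  have hb : 0 < 1 - ((α + 1) / p) * x := by
    have h : (α + 1) * x < p := by nlinarith
    have : ((α + 1) / p) * x < 1 := by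
      rw [div_mul_eq_mul_div, div_lt_one hp0]; exact h
    linarith
  set b := 1 - ((α + 1) / p) * x with hbdef
  set a := 1 + ((p - α - 1) / p) * x with hadef
  have ha : 0 < a := by
    have h : 0 < (p - α - 1) / p := div_pos (by linarith) hp0
    rw [hadef]; nlinarith [mul_pos h hx0]
  -- Step A: strict Bernoulli with negative exponent α/p at t = -x
  have hA : 1 - (α / p) * x < (1 - x) ^ (α / p) := by
    have := bernoulli_neg_strict (t := -x) (q := α / p) (by linarith) (by intro h; nlinarith)
      (div_neg_of_neg_of_pos hα hp0)
    have e1 : 1 + -x = 1 - x := by ring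
    have e2 : 1 + α / p * -x = 1 - α / p * x := by ring
    rwa [e1, e2] at this
  have hm : 0 < 1 - (α / p) * x := by
    have : (α / p) * x < 0 := mul_neg_of_neg_of_pos (div_neg_of_neg_of_pos hα hp0) hx0
    linarith
  -- Step B: raise to power p
  have hB : (1 - (α / p) * x) ^ p < (1 - x) ^ α := by
    have h := Real.rpow_lt_rpow hm.le hA hp0
    rwa [← Real.rpow_mul h1x.le, div_mul_cancel₀ α hp0.ne'] at h
  -- Step C: weighted AM-GM
  have hC : a * b ^ (p - 1) ≤ (1 - (α / p) * x) ^ p := by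
    have hw₁ : (0:ℝ) ≤ 1 / p := by positivity
    have hw₂ : (0:ℝ) ≤ (p - 1) / p := div_nonneg (by linarith) hp0.le
    have hw : 1 / p + (p - 1) / p = 1 := by field_simp; ring
    have hgm := Real.geom_mean_le_arith_mean2_weighted hw₁ hw₂ ha.le hb.le hw
    have hmean : 1 / p * a + (p - 1) / p * b = 1 - (α / p) * x := by
      simp only [hadef, hbdef]; field_simp; ring
    rw [hmean] at hgm
    have hpow := Real.rpow_le_rpow (by positivity) hgm hp0.le
    rwa [Real.mul_rpow (by positivity) (by positivity), ← Real.rpow_mul ha.le,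
      ← Real.rpow_mul hb.le, one_div_mul_cancel hp0.ne', Real.rpow_one,
      div_mul_cancel₀ _ hp0.ne'] at hpow
  -- combine
  have key : a * b ^ (p - 1) < (1 - x) ^ α := lt_of_le_of_lt hC hB
  have hbp : 0 < b ^ (p - 1) := Real.rpow_pos_of_pos hb _
  have hfin : a < (1 - x) ^ α / b ^ (p - 1) := (lt_div_iff₀ hbp).mpr key
  rw [hadef] at hfin
  linarith
end

section
/- Let p > 1 and 0 ≤ α < p − 1 be real numbers, and define H(x) = (1 − ((α+1)/p)x)^{1−p} − (1+x)^α for x ∈ [0,1]. Then H(x) > ((p − α − 1)/p) · x for every x ∈ (0,1). -/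
/-- The auxiliary function `H(x) = (1 - ((α+1)/p)x)^{1-p} - (1+x)^α` satisfies
`H(x) > ((p-α-1)/p) x` on `(0,1)`. -/
theorem aux_H_ineq_nonneg (p α : ℝ) (hp : 1 < p) (hα0 : 0 ≤ α) (hα : α < p - 1)
    (x : ℝ) (hx : x ∈ Set.Ioo (0 : ℝ) 1) :
    (1 - ((α + 1) / p) * x) ^ (1 - p) - (1 + x) ^ α > ((p - α - 1) / p) * x := by
  obtain ⟨hx0, hx1⟩ := hx
  have hp0 : (0:ℝ) < p := by linarith
  set c : ℝ := (α + 1) / p with hc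
  have hc0 : 0 < c := div_pos (by linarith) hp0
  have hc1 : c < 1 := (div_lt_one hp0).2 (by linarith)
  have hcp : c * p = α + 1 := div_mul_cancel₀ _ hp0.ne'
  have hbase : ∀ y ∈ Set.Icc (0:ℝ) 1, 0 < 1 - c * y := by
    intro y hy
    have h1 : c * y ≤ c * 1 := mul_le_mul_of_nonneg_left hy.2 hc0.le
    nlinarith
  set g : ℝ → ℝ := fun y => (1 - c * y) ^ (p - 1) * ((1 + y) ^ α + (1 - c) * y) with hg
  have hanti : StrictAntiOn g (Set.Icc 0 1) := by
    apply strictAntiOn_of_deriv_neg (convex_Icc 0 1)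
    · apply ContinuousOn.mul
      · exact ((continuousOn_const).sub (continuousOn_const.mul continuousOn_id)).rpow_const
          (fun y hy => Or.inl (hbase y hy).ne')
      · refine ContinuousOn.add ?_ (continuousOn_const.mul continuousOn_id)
        exact ((continuousOn_const).add continuousOn_id).rpow_const
          (fun y hy => Or.inl (by have h1 : (0:ℝ) ≤ y := hy.1; show (1:ℝ) + y ≠ 0; intro h; linarith))
    · intro y hy
      rw [interior_Icc] at hy
      obtain ⟨hy0, hy1⟩ := hy
      have hb : 0 < 1 - c * y := hbase y ⟨hy0.le, hy1.le⟩
      have h1y : (0:ℝ) < 1 + y := by linarith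
      have hd1 : HasDerivAt (fun y : ℝ => (1 - c * y) ^ (p - 1))
          (-c * (p - 1) * (1 - c * y) ^ (p - 1 - 1)) y := by
        have hlin : HasDerivAt (fun y : ℝ => 1 - c * y) (-c) y := by
          simpa using ((hasDerivAt_id y).const_mul c).const_sub 1
        exact hlin.rpow_const (Or.inl hb.ne')
      have hd2 : HasDerivAt (fun y : ℝ => (1 + y) ^ α + (1 - c) * y)
          (1 * α * (1 + y) ^ (α - 1) + (1 - c) * 1) y := by
        have h2a : HasDerivAt (fun y : ℝ => 1 + y) 1 y := by
          simpa using (hasDerivAt_id y).const_add 1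
        exact (h2a.rpow_const (Or.inl h1y.ne')).add ((hasDerivAt_id y).const_mul (1 - c))
      have hd : HasDerivAt g
          ((-c * (p - 1) * (1 - c * y) ^ (p - 1 - 1)) * ((1 + y) ^ α + (1 - c) * y)
            + (1 - c * y) ^ (p - 1) * (1 * α * (1 + y) ^ (α - 1) + (1 - c) * 1)) y :=
        hd1.mul hd2
      rw [hd.deriv]
      have hsplit : (1 - c * y) ^ (p - 1) = (1 - c * y) ^ (p - 1 - 1) * (1 - c * y) := by
        rw [← Real.rpow_add_one hb.ne']; ring_nf
      rw [hsplit]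
      have hE : (-c * (p - 1) * (1 - c * y) ^ (p - 1 - 1)) * ((1 + y) ^ α + (1 - c) * y)
            + (1 - c * y) ^ (p - 1 - 1) * (1 - c * y) * (1 * α * (1 + y) ^ (α - 1) + (1 - c) * 1)
          = (1 - c * y) ^ (p - 1 - 1) *
            ((1 - c * y) * (α * (1 + y) ^ (α - 1) + (1 - c))
              - (c * (p - 1)) * ((1 + y) ^ α + (1 - c) * y)) := by ring
      rw [hE]
      apply mul_neg_of_pos_of_neg (Real.rpow_pos_of_pos hb _)
      -- now show the bracket is negative
      have hαpow : (1 + y) ^ (α - 1) * (1 + y) = (1 + y) ^ α := by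
        rw [← Real.rpow_add_one h1y.ne']; ring_nf
      have hq : (0:ℝ) < (1 + y) ^ (α - 1) := Real.rpow_pos_of_pos h1y _
      have hpow1 : (1:ℝ) ≤ (1 + y) ^ α := by
        simpa using Real.rpow_le_rpow zero_le_one (by linarith : (1:ℝ) ≤ 1 + y) hα0
      have h1 : α * ((1 - c * y) * (1 + y) ^ (α - 1)) ≤ α * (1 + y) ^ α := by
        apply mul_le_mul_of_nonneg_left _ hα0
        rw [← hαpow, mul_comm ((1 + y) ^ (α - 1))]
        exact mul_le_mul_of_nonneg_right (by nlinarith) hq.le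
      have hcp2 : c * (p - 1) = α + 1 - c := by linear_combination hcp
      rw [hcp2]
      nlinarith [mul_pos (sub_pos.2 hc1) hy0, mul_pos hy0 hc0,
        mul_le_mul_of_nonneg_right hpow1 (by linarith : (0:ℝ) ≤ α + 1 - c - α)]
  have key : g x < 1 := by
    have h := hanti (Set.left_mem_Icc.2 zero_le_one) ⟨hx0.le, hx1.le⟩ hx0
    have hg0 : g 0 = 1 := by simp [hg]
    rwa [hg0] at h
  have hb : 0 < 1 - c * x := hbase x ⟨hx0.le, hx1.le⟩
  have hpow : 0 < (1 - c * x) ^ (p - 1) := Real.rpow_pos_of_pos hb _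
  have hA : (1 + x) ^ α + (1 - c) * x < (1 - c * x) ^ (1 - p) := by
    rw [show (1:ℝ) - p = -(p - 1) by ring, Real.rpow_neg hb.le, ← one_div, lt_div_iff₀ hpow]
    calc ((1 + x) ^ α + (1 - c) * x) * (1 - c * x) ^ (p - 1) = g x := by
          simp only [hg]; ring
      _ < 1 := key
  have hfinal : (p - α - 1) / p = 1 - c := by rw [hc]; field_simp; ring
  rw [hfinal]
  linarith
end
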